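/- arXiv:1208.4923 — 7 statements merged into one kernel-verified Lean document; each statement's English description precedes it below -/
import Mathlib

section
/- Let I ⊆ ℝ be an open interval, f : I → (0,∞) and h : I → ℝ smooth, n, m ∈ ℝ, and let η̂ : ℝ × I × (0,∞) → ℝ be smooth. Define ξ̂(t,x,v) = √(vⁿ/f(x)) for v > 0. Suppose u : Ω → (0,∞) is smooth on an open set Ω ⊆ ℝ × I and satisfies u_t(t,x) = η̂(t,x,u(t,x)) − ξ̂(t,x,u(t,x))·u_x(t,x) on Ω. Then for all (t,x) ∈ Ω, the quantity f(x)u_tt − ∂_x(uⁿu_x) − h(x)uᵐ equals f(x)[η̂_t − ξ̂_t u_x + (η̂_u − ξ̂_u u_x)(η̂ − ξ̂ u_x) − ξ̂(η̂_x + η̂_u u_x − ξ̂_x u_x − ξ̂_u u_x²)] − n u^{n−1}u_x² − h(x)uᵐ, an expression depending only on (t,x), u(t,x) and u_x(t,x); in particular the coefficient of u_xx vanishes identically because f(x)ξ̂² = uⁿ. -/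
open Real Set

noncomputable section

/-- Partial derivative in the first (time) variable of a function of `(t, x)`. -/
def pt2 (u : ℝ → ℝ → ℝ) : ℝ → ℝ → ℝ := fun t x => deriv (fun s => u s x) t

/-- Partial derivative in the second (space) variable of a function of `(t, x)`. -/
def px2 (u : ℝ → ℝ → ℝ) : ℝ → ℝ → ℝ := fun t x => deriv (fun y => u t y) x

/-- Partial derivative in the first variable `t` of a function of `(t, x, u)`. -/
def pt3 (F : ℝ → ℝ → ℝ → ℝ) : ℝ → ℝ → ℝ → ℝ := fun t x v => deriv (fun s => F s x v) t

/-- Partial derivative in the second variable `x` of a function of `(t, x, u)`. -/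
def px3 (F : ℝ → ℝ → ℝ → ℝ) : ℝ → ℝ → ℝ → ℝ := fun t x v => deriv (fun y => F t y v) x

/-- Partial derivative in the third variable `u` of a function of `(t, x, u)`. -/
def pu3 (F : ℝ → ℝ → ℝ → ℝ) : ℝ → ℝ → ℝ → ℝ := fun t x v => deriv (fun w => F t x w) v

lemma hd_fst2 {F : ℝ × ℝ → ℝ} {t x : ℝ} (hF : DifferentiableAt ℝ F (t, x)) :
    HasDerivAt (fun s => F (s, x)) (fderiv ℝ F (t, x) (1, 0)) t :=
  hF.hasFDerivAt.comp_hasDerivAt t ((hasDerivAt_id t).prodMk (hasDerivAt_const t x))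

lemma hd_snd2 {F : ℝ × ℝ → ℝ} {t x : ℝ} (hF : DifferentiableAt ℝ F (t, x)) :
    HasDerivAt (fun y => F (t, y)) (fderiv ℝ F (t, x) (0, 1)) x :=
  hF.hasFDerivAt.comp_hasDerivAt x ((hasDerivAt_const x t).prodMk (hasDerivAt_id x))

lemma fd2 (L : ℝ × ℝ →L[ℝ] ℝ) (a b : ℝ) :
    L (a, b) = a * L (1, 0) + b * L (0, 1) := by
  have : (a, b) = a • ((1:ℝ), (0:ℝ)) + b • ((0:ℝ), (1:ℝ)) := by
    simp [Prod.ext_iff]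
  rw [this, map_add, map_smul, map_smul, smul_eq_mul, smul_eq_mul]

lemma fd3 (L : ℝ × ℝ × ℝ →L[ℝ] ℝ) (a b c : ℝ) :
    L (a, b, c) = a * L (1, 0, 0) + b * L (0, 1, 0) + c * L (0, 0, 1) := by
  have : (a, b, c) = a • ((1:ℝ), (0:ℝ), (0:ℝ)) + b • ((0:ℝ), (1:ℝ), (0:ℝ))
      + c • ((0:ℝ), (0:ℝ), (1:ℝ)) := by
    simp [Prod.ext_iff]
  rw [this, map_add, map_add, map_smul, map_smul, map_smul]
  simp [smul_eq_mul]


set_option maxHeartbeats 1000000 in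
/-- For `ξ̂ = √(uⁿ/f)` the vector field `∂_t + ξ̂∂_x + η̂∂_u` is singular:
on solutions of the invariant surface condition the second-order terms of
`L[u] = f(x)u_tt − (uⁿu_x)_x − h(x)uᵐ` disappear, since `f ξ̂² = uⁿ`. -/
theorem singular_vector_field
    (I : Set ℝ) (hI : IsOpen I) (hIc : I.OrdConnected)
    (f h : ℝ → ℝ) (hf : ContDiffOn ℝ (⊤ : ℕ∞) f I) (hh : ContDiffOn ℝ (⊤ : ℕ∞) h I)
    (hfpos : ∀ x ∈ I, 0 < f x)
    (n m : ℝ)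
    (Eta : ℝ → ℝ → ℝ → ℝ)
    (hEta : ContDiffOn ℝ (⊤ : ℕ∞) (fun p : ℝ × ℝ × ℝ => Eta p.1 p.2.1 p.2.2)
      (univ ×ˢ I ×ˢ Ioi (0 : ℝ)))
    (Xi : ℝ → ℝ → ℝ → ℝ)
    (hXidef : ∀ (t : ℝ), ∀ x ∈ I, ∀ v : ℝ, 0 < v → Xi t x v = Real.sqrt (v ^ n / f x))
    (Ω : Set (ℝ × ℝ)) (hΩ : IsOpen Ω) (hΩI : ∀ p ∈ Ω, p.2 ∈ I)
    (u : ℝ → ℝ → ℝ) (hu : ContDiffOn ℝ (⊤ : ℕ∞) (fun p : ℝ × ℝ => u p.1 p.2) Ω)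
    (hupos : ∀ p ∈ Ω, 0 < u p.1 p.2)
    (hchar : ∀ t x : ℝ, (t, x) ∈ Ω →
      pt2 u t x = Eta t x (u t x) - Xi t x (u t x) * px2 u t x) :
    ∀ t x : ℝ, (t, x) ∈ Ω →
      (f x * pt2 (pt2 u) t x
          - deriv (fun y => (u t y) ^ n * px2 u t y) x
          - h x * (u t x) ^ m
        =
        f x * (pt3 Eta t x (u t x) - pt3 Xi t x (u t x) * px2 u t x
              + (pu3 Eta t x (u t x) - pu3 Xi t x (u t x) * px2 u t x)
                * (Eta t x (u t x) - Xi t x (u t x) * px2 u t x)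
              - Xi t x (u t x) *
                  (px3 Eta t x (u t x) + pu3 Eta t x (u t x) * px2 u t x
                    - px3 Xi t x (u t x) * px2 u t x
                    - pu3 Xi t x (u t x) * (px2 u t x) ^ 2))
          - n * (u t x) ^ (n - 1) * (px2 u t x) ^ 2
          - h x * (u t x) ^ m)
      ∧ f x * (Xi t x (u t x)) ^ 2 = (u t x) ^ n := by
  intro t x hmem
  have hxI : x ∈ I := hΩI (t, x) hmem
  set U : ℝ × ℝ → ℝ := fun p => u p.1 p.2 with hU
  set v0 : ℝ := u t x with hv0def
  have hv0 : 0 < v0 := hupos (t, x) hmem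
  have hfx : 0 < f x := hfpos x hxI
  -- smoothness of u at the point
  have hUc : ContDiffAt ℝ ((⊤ : ℕ∞) : WithTop ℕ∞) U (t, x) :=
    hu.contDiffAt (hΩ.mem_nhds hmem)
  have hUd : ∀ q ∈ Ω, DifferentiableAt ℝ U q := fun q hq =>
    (hu.contDiffAt (hΩ.mem_nhds hq)).differentiableAt (by simp)
  have hDd : DifferentiableAt ℝ (fderiv ℝ U) (t, x) :=
    (hUc.fderiv_right (m := (⊤ : ℕ∞)) (by exact_mod_cast le_rfl)).differentiableAt (by simp)
  set A : ℝ × ℝ →L[ℝ] ℝ := fderiv ℝ U (t, x) with hA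
  set B := fderiv ℝ (fderiv ℝ U) (t, x) with hB
  -- representation of first partials on Ω
  have hptrep : ∀ q ∈ Ω, pt2 u q.1 q.2 = fderiv ℝ U q (1, 0) := by
    intro q hq
    exact (hd_fst2 (F := U) (t := q.1) (x := q.2) (hUd q hq)).deriv
  have hpxrep : ∀ q ∈ Ω, px2 u q.1 q.2 = fderiv ℝ U q (0, 1) := by
    intro q hq
    exact (hd_snd2 (F := U) (t := q.1) (x := q.2) (hUd q hq)).deriv
  set ux : ℝ := px2 u t x with hux
  set ut : ℝ := pt2 u t x with hut
  have huxA : ux = A (0, 1) := hpxrep (t, x) hmem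
  have hutA : ut = A (1, 0) := hptrep (t, x) hmem
  -- derivative curves of u
  have hdut : HasDerivAt (fun s => u s x) ut t := hutA ▸ hd_fst2 (hUd _ hmem)
  have hdux : HasDerivAt (fun y => u t y) ux x := huxA ▸ hd_snd2 (hUd _ hmem)
  -- eventual facts
  have hevΩt : ∀ᶠ s in nhds t, (s, x) ∈ Ω :=
    (Continuous.continuousAt (by continuity)).eventually_mem (hΩ.mem_nhds hmem)
  have hevΩx : ∀ᶠ y in nhds x, (t, y) ∈ Ω :=
    (Continuous.continuousAt (by continuity)).eventually_mem (hΩ.mem_nhds hmem)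
  have hevI : ∀ᶠ y in nhds x, y ∈ I := hI.mem_nhds hxI
  -- the function G
  set G : ℝ × ℝ → ℝ := fun q => Real.sqrt (q.2 ^ n / f q.1) with hG
  have hGd : DifferentiableAt ℝ G (x, v0) := by
    have h1 : ContDiffAt ℝ ((⊤ : ℕ∞) : WithTop ℕ∞) (fun q : ℝ × ℝ => q.2 ^ n) (x, v0) :=
      ContDiffAt.rpow_const_of_ne contDiffAt_snd hv0.ne'
    have h2 : ContDiffAt ℝ ((⊤ : ℕ∞) : WithTop ℕ∞) (fun q : ℝ × ℝ => f q.1) (x, v0) :=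
      (hf.contDiffAt (hI.mem_nhds hxI)).comp _ contDiffAt_fst
    have h3 := h1.div h2 hfx.ne'
    have hpos : (0:ℝ) < v0 ^ n / f x := div_pos (Real.rpow_pos_of_pos hv0 n) hfx
    exact (ContDiffAt.comp (x, v0) (Real.contDiffAt_sqrt (x := v0 ^ n / f x) hpos.ne')
      h3).differentiableAt (by simp)
  set Gx : ℝ := fderiv ℝ G (x, v0) (1, 0) with hGx
  set Gv : ℝ := fderiv ℝ G (x, v0) (0, 1) with hGv
  -- E differentiable
  have hEd : DifferentiableAt ℝ (fun p : ℝ × ℝ × ℝ => Eta p.1 p.2.1 p.2.2) (t, x, v0) := by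
    refine (hEta.contDiffAt ?_).differentiableAt (by simp)
    exact (isOpen_univ.prod (hI.prod isOpen_Ioi)).mem_nhds ⟨mem_univ t, hxI, hv0⟩
  set E := fun p : ℝ × ℝ × ℝ => Eta p.1 p.2.1 p.2.2 with hE
  set DtE : ℝ := fderiv ℝ E (t, x, v0) (1, 0, 0) with hDtE
  set DxE : ℝ := fderiv ℝ E (t, x, v0) (0, 1, 0) with hDxE
  set DuE : ℝ := fderiv ℝ E (t, x, v0) (0, 0, 1) with hDuE
  -- identify partial derivatives of Eta
  have hpt3E : pt3 Eta t x v0 = DtE := by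
    have := (hEd.hasFDerivAt.comp_hasDerivAt t
      ((hasDerivAt_id t).prodMk ((hasDerivAt_const t x).prodMk (hasDerivAt_const t v0)))).deriv
    exact this
  have hpx3E : px3 Eta t x v0 = DxE := by
    have := (hEd.hasFDerivAt.comp_hasDerivAt x
      ((hasDerivAt_const x t).prodMk ((hasDerivAt_id x).prodMk (hasDerivAt_const x v0)))).deriv
    exact this
  have hpu3E : pu3 Eta t x v0 = DuE := by
    have := (hEd.hasFDerivAt.comp_hasDerivAt v0
      ((hasDerivAt_const v0 t).prodMk ((hasDerivAt_const v0 x).prodMk (hasDerivAt_id v0)))).deriv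
    exact this
  -- identify partial derivatives of Xi
  have hpt3X : pt3 Xi t x v0 = 0 := by
    have : (fun s => Xi s x v0) = fun _ => Real.sqrt (v0 ^ n / f x) :=
      funext fun s => hXidef s x hxI v0 hv0
    show deriv (fun s => Xi s x v0) t = 0
    rw [this, deriv_const]
  have hpx3X : px3 Xi t x v0 = Gx := by
    have hev : (fun y => Xi t y v0) =ᶠ[nhds x] fun y => G (y, v0) := by
      filter_upwards [hevI] with y hy
      exact hXidef t y hy v0 hv0
    show deriv (fun y => Xi t y v0) x = Gx
    rw [hev.deriv_eq]
    exact (hd_fst2 hGd).deriv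
  have hpu3X : pu3 Xi t x v0 = Gv := by
    have hev : (fun w => Xi t x w) =ᶠ[nhds v0] fun w => G (x, w) := by
      filter_upwards [isOpen_Ioi.mem_nhds hv0] with w hw
      exact hXidef t x hxI w hw
    show deriv (fun w => Xi t x w) v0 = Gv
    rw [hev.deriv_eq]
    exact (hd_snd2 hGd).deriv
  -- Xi value and second conjunct
  have hXival : Xi t x v0 = Real.sqrt (v0 ^ n / f x) := hXidef t x hxI v0 hv0
  set Xi0 : ℝ := Xi t x v0 with hXi0
  have hfx2 : f x * Xi0 ^ 2 = v0 ^ n := by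
    rw [hXival, sq_sqrt (le_of_lt (div_pos (Real.rpow_pos_of_pos hv0 n) hfx))]
    field_simp
  -- mixed second derivatives via fderiv of fderiv
  have hP_t : HasDerivAt (fun s => px2 u s x) (B (1, 0) (0, 1)) t := by
    have hDcurve : HasDerivAt (fun s => fderiv ℝ U (s, x)) (B (1, 0)) t :=
      hDd.hasFDerivAt.comp_hasDerivAt t ((hasDerivAt_id t).prodMk (hasDerivAt_const t x))
    have h1 : HasDerivAt (fun s => fderiv ℝ U (s, x) (0, 1)) (B (1, 0) (0, 1)) t := by
      have := hDcurve.clm_apply (hasDerivAt_const t ((0:ℝ), (1:ℝ)))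
      simpa using this
    refine h1.congr_of_eventuallyEq ?_
    filter_upwards [hevΩt] with s hs
    exact hpxrep (s, x) hs
  have hP_x : HasDerivAt (fun y => px2 u t y) (B (0, 1) (0, 1)) x := by
    have hDcurve : HasDerivAt (fun y => fderiv ℝ U (t, y)) (B (0, 1)) x :=
      hDd.hasFDerivAt.comp_hasDerivAt x ((hasDerivAt_const x t).prodMk (hasDerivAt_id x))
    have h1 : HasDerivAt (fun y => fderiv ℝ U (t, y) (0, 1)) (B (0, 1) (0, 1)) x := by
      have := hDcurve.clm_apply (hasDerivAt_const x ((0:ℝ), (1:ℝ)))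
      simpa using this
    refine h1.congr_of_eventuallyEq ?_
    filter_upwards [hevΩx] with y hy
    exact hpxrep (t, y) hy
  have hQ_x : HasDerivAt (fun y => pt2 u t y) (B (0, 1) (1, 0)) x := by
    have hDcurve : HasDerivAt (fun y => fderiv ℝ U (t, y)) (B (0, 1)) x :=
      hDd.hasFDerivAt.comp_hasDerivAt x ((hasDerivAt_const x t).prodMk (hasDerivAt_id x))
    have h1 : HasDerivAt (fun y => fderiv ℝ U (t, y) (1, 0)) (B (0, 1) (1, 0)) x := by
      have := hDcurve.clm_apply (hasDerivAt_const x ((1:ℝ), (0:ℝ)))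
      simpa using this
    refine h1.congr_of_eventuallyEq ?_
    filter_upwards [hevΩx] with y hy
    exact hptrep (t, y) hy
  -- Clairaut
  have hsym : B (1, 0) (0, 1) = B (0, 1) (1, 0) :=
    (hUc.isSymmSndFDerivAt (by simp; exact WithTop.coe_le_coe.mpr le_top)) (1, 0) (0, 1)
  -- chain rules for Eta along the solution
  have hE_t : HasDerivAt (fun s => Eta s x (u s x)) (DtE + ut * DuE) t := by
    have hcur : HasDerivAt (fun s => ((s, x, u s x) : ℝ × ℝ × ℝ)) ((1:ℝ), (0:ℝ), ut) t :=
      (hasDerivAt_id t).prodMk ((hasDerivAt_const t x).prodMk hdut)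
    have h0 := hEd.hasFDerivAt.comp_hasDerivAt t hcur
    have h2 : fderiv ℝ E (t, x, v0) ((1:ℝ), (0:ℝ), ut) = DtE + ut * DuE := by
      rw [fd3]; ring
    rw [h2] at h0
    exact h0
  have hE_x : HasDerivAt (fun y => Eta t y (u t y)) (DxE + ux * DuE) x := by
    have hcur : HasDerivAt (fun y => ((t, y, u t y) : ℝ × ℝ × ℝ)) ((0:ℝ), (1:ℝ), ux) x :=
      (hasDerivAt_const x t).prodMk ((hasDerivAt_id x).prodMk hdux)
    have h0 := hEd.hasFDerivAt.comp_hasDerivAt x hcur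
    have h2 : fderiv ℝ E (t, x, v0) ((0:ℝ), (1:ℝ), ux) = DxE + ux * DuE := by
      rw [fd3]; ring
    rw [h2] at h0
    exact h0
  -- chain rules for Xi (via G) along the solution
  have hX_t : HasDerivAt (fun s => Xi s x (u s x)) (ut * Gv) t := by
    have hcur : HasDerivAt (fun s => ((x, u s x) : ℝ × ℝ)) ((0:ℝ), ut) t :=
      (hasDerivAt_const t x).prodMk hdut
    have h0 := hGd.hasFDerivAt.comp_hasDerivAt t hcur
    have h2 : fderiv ℝ G (x, v0) ((0:ℝ), ut) = ut * Gv := by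
      rw [fd2]; ring
    rw [h2] at h0
    refine h0.congr_of_eventuallyEq ?_
    filter_upwards [hevΩt] with s hs
    exact hXidef s x hxI (u s x) (hupos (s, x) hs)
  have hX_x : HasDerivAt (fun y => Xi t y (u t y)) (Gx + ux * Gv) x := by
    have hcur : HasDerivAt (fun y => ((y, u t y) : ℝ × ℝ)) ((1:ℝ), ux) x :=
      (hasDerivAt_id x).prodMk hdux
    have h0 := hGd.hasFDerivAt.comp_hasDerivAt x hcur
    have h2 : fderiv ℝ G (x, v0) ((1:ℝ), ux) = Gx + ux * Gv := by
      rw [fd2]; ring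
    rw [h2] at h0
    refine h0.congr_of_eventuallyEq ?_
    filter_upwards [hevΩx, hevI] with y hy hyI
    exact hXidef t y hyI (u t y) (hupos (t, y) hy)
  -- u_tt via the characteristic equation
  have hbig_t : HasDerivAt (fun s => Eta s x (u s x) - Xi s x (u s x) * px2 u s x)
      ((DtE + ut * DuE) - ((ut * Gv) * ux + Xi0 * (B (1, 0) (0, 1)))) t :=
    hE_t.sub (hX_t.mul hP_t)
  have hptt : pt2 (pt2 u) t x
      = (DtE + ut * DuE) - ((ut * Gv) * ux + Xi0 * (B (1, 0) (0, 1))) := by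
    have hev : (fun s => pt2 u s x)
        =ᶠ[nhds t] (fun s => Eta s x (u s x) - Xi s x (u s x) * px2 u s x) := by
      filter_upwards [hevΩt] with s hs
      exact hchar s x hs
    show deriv (fun s => pt2 u s x) t = _
    rw [hev.deriv_eq, hbig_t.deriv]
  -- u_tx via the characteristic equation in the x direction
  have hbig_x : HasDerivAt (fun y => pt2 u t y)
      ((DxE + ux * DuE) - ((Gx + ux * Gv) * ux + Xi0 * (B (0, 1) (0, 1)))) x := by
    refine HasDerivAt.congr_of_eventuallyEq (hE_x.sub (hX_x.mul hP_x)) ?_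
    filter_upwards [hevΩx] with y hy
    exact hchar t y hy
  have hQx2 : B (0, 1) (1, 0)
      = (DxE + ux * DuE) - ((Gx + ux * Gv) * ux + Xi0 * (B (0, 1) (0, 1))) :=
    hQ_x.unique hbig_x
  -- flux derivative
  have hflux : deriv (fun y => (u t y) ^ n * px2 u t y) x
      = (ux * n * v0 ^ (n - 1)) * ux + v0 ^ n * (B (0, 1) (0, 1)) := by
    have hrpow : HasDerivAt (fun y => (u t y) ^ n) (ux * n * v0 ^ (n - 1)) x :=
      hdux.rpow_const (Or.inl hv0.ne')
    exact (hrpow.mul hP_x).deriv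
  have hc0 : ut = Eta t x v0 - Xi0 * ux := hchar t x hmem
  refine ⟨?_, hfx2⟩
  rw [hptt, hflux, hpt3E, hpx3E, hpu3E, hpt3X, hpx3X, hpu3X, hsym, hQx2]
  linear_combination (f x * (DuE - Gv * ux)) * hc0 + (B (0, 1) (0, 1)) * hfx2

end
end

section
/- Let n, m, a, b, r, s ∈ ℝ with n ≠ 0. Set ξ(x) = a(n+1)x² + (2b(n+1) − r)x + s and let I ⊆ ℝ be an open interval on which ξ(x) ≠ 0. Let f, h : I → (0,∞) be smooth functions satisfying f'(x)/f(x) = (2r − (3n+4)(ax+b))/ξ(x) and h'(x)/h(x) = (2r − (m+3n+3)(ax+b))/ξ(x) on I, and set η(t,x,u) = (ax+b)u. Then ξ and η satisfy the determining system (E1)–(E5) identically for all t ∈ ℝ, x ∈ I and u > 0. -/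
open Real Set

noncomputable section

/-- The determining system (E1)–(E5) for regular reduction operators
`Q = ∂_t + ξ∂_x + η∂_u` of the equation `f(x)u_tt = (uⁿu_x)_x + h(x)uᵐ`, required to hold
identically for `t ∈ ℝ`, `x ∈ I` and `u > 0`. -/
def DeterminingSystem (n m : ℝ) (f h : ℝ → ℝ) (I : Set ℝ) (Xi Eta : ℝ → ℝ → ℝ → ℝ) : Prop :=
  ∀ t : ℝ, ∀ x ∈ I, ∀ u : ℝ, 0 < u →
    -- (E1)  ξ_u = 0
    pu3 Xi t x u = 0
    -- (E2)  2fξ_t − nηu^{n−1} + (2ξ_x + ξ f_x/f)uⁿ = 0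
    ∧ 2 * f x * pt3 Xi t x u - n * Eta t x u * u ^ (n - 1)
        + (2 * px3 Xi t x u + Xi t x u * deriv f x / f x) * u ^ n = 0
    -- (E3)  (2nξ_x − nη_u + nξ f_x/f)u^{n−1} + (n−n²)ηu^{n−2} − η_{uu}uⁿ + fξ²η_{uu} = 0
    ∧ (2 * n * px3 Xi t x u - n * pu3 Eta t x u + n * Xi t x u * deriv f x / f x) * u ^ (n - 1)
        + (n - n ^ 2) * Eta t x u * u ^ (n - 2)
        - pu3 (pu3 Eta) t x u * u ^ n
        + f x * (Xi t x u) ^ 2 * pu3 (pu3 Eta) t x u = 0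
    -- (E4)  2fξ_tξ_x − 2fξ_tη_u − 2nη_xu^{n−1} − fξ_{tt} − 2fξηη_{uu} − 2fξη_{tu}
    --        + (ξ_{xx} − 2η_{xu})uⁿ = 0
    ∧ 2 * f x * pt3 Xi t x u * px3 Xi t x u - 2 * f x * pt3 Xi t x u * pu3 Eta t x u
        - 2 * n * px3 Eta t x u * u ^ (n - 1)
        - f x * pt3 (pt3 Xi) t x u
        - 2 * f x * Xi t x u * Eta t x u * pu3 (pu3 Eta) t x u
        - 2 * f x * Xi t x u * pt3 (pu3 Eta) t x u
        + (px3 (px3 Xi) t x u - 2 * px3 (pu3 Eta) t x u) * u ^ n = 0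
    -- (E5)  (ξh f_x/f − ξh_x + hη_u)uᵐ + fη²η_{uu} + 2fηη_{tu} − 2fξ_tη_x − η_{xx}uⁿ
    --        + fη_{tt} − mhηu^{m−1} = 0
    ∧ (Xi t x u * h x * deriv f x / f x - Xi t x u * deriv h x + h x * pu3 Eta t x u) * u ^ m
        + f x * (Eta t x u) ^ 2 * pu3 (pu3 Eta) t x u
        + 2 * f x * Eta t x u * pt3 (pu3 Eta) t x u
        - 2 * f x * pt3 Xi t x u * px3 Eta t x u
        - px3 (px3 Eta) t x u * u ^ n
        + f x * pt3 (pt3 Eta) t x u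
        - m * h x * Eta t x u * u ^ (m - 1) = 0

/-- Case 1.1. With `ξ = a(n+1)x² + (2b(n+1)−r)x + s`, `η = (ax+b)u` and
`f, h` satisfying the indicated logarithmic-derivative equations, the determining system
(E1)–(E5) holds identically. -/
theorem case_1_1_verification
    (n m a b r s : ℝ) (hn : n ≠ 0)
    (ξ : ℝ → ℝ)
    (hξdef : ∀ x : ℝ, ξ x = a * (n + 1) * x ^ 2 + (2 * b * (n + 1) - r) * x + s)
    (I : Set ℝ) (hI : IsOpen I) (hIc : I.OrdConnected)
    (hξne : ∀ x ∈ I, ξ x ≠ 0)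
    (f h : ℝ → ℝ)
    (hf : ContDiffOn ℝ (⊤ : ℕ∞) f I) (hh : ContDiffOn ℝ (⊤ : ℕ∞) h I)
    (hfpos : ∀ x ∈ I, 0 < f x) (hhpos : ∀ x ∈ I, 0 < h x)
    (hfeq : ∀ x ∈ I, deriv f x / f x = (2 * r - (3 * n + 4) * (a * x + b)) / ξ x)
    (hheq : ∀ x ∈ I, deriv h x / h x = (2 * r - (m + 3 * n + 3) * (a * x + b)) / ξ x) :
    DeterminingSystem n m f h I (fun _ x _ => ξ x) (fun _ x u => (a * x + b) * u) := by
  have hξfun : ξ = fun x => a * (n + 1) * x ^ 2 + (2 * b * (n + 1) - r) * x + s :=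
    funext hξdef
  have hders : ∀ y : ℝ, HasDerivAt ξ (2 * (a * (n + 1)) * y + (2 * b * (n + 1) - r)) y := by
    intro y
    rw [hξfun]
    have h1 := (hasDerivAt_pow 2 y).const_mul (a * (n + 1))
    have h2 := (hasDerivAt_id y).const_mul (2 * b * (n + 1) - r)
    have h3 := (h1.add h2).add_const s
    refine h3.congr_deriv ?_
    push_cast
    ring
  have hξ' : deriv ξ = fun y => 2 * (a * (n + 1)) * y + (2 * b * (n + 1) - r) :=
    funext fun y => (hders y).deriv
  have hξ'' : ∀ y : ℝ, deriv (deriv ξ) y = 2 * (a * (n + 1)) := by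
    intro y
    rw [hξ']
    have h4 := ((hasDerivAt_id y).const_mul (2 * (a * (n + 1)))).add_const (2 * b * (n + 1) - r)
    simpa using h4.deriv
  intro t x hx u hu
  have hfx : f x ≠ 0 := (hfpos x hx).ne'
  have hhx : h x ≠ 0 := (hhpos x hx).ne'
  have hξx : ξ x ≠ 0 := hξne x hx
  have hux : u ≠ 0 := hu.ne'
  have hf' : deriv f x = (2 * r - (3 * n + 4) * (a * x + b)) / ξ x * f x :=
    (div_eq_iff hfx).mp (hfeq x hx)
  have hh' : deriv h x = (2 * r - (m + 3 * n + 3) * (a * x + b)) / ξ x * h x :=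
    (div_eq_iff hhx).mp (hheq x hx)
  -- partial derivatives of Xi
  have X_t : ∀ t' x' u' : ℝ, pt3 (fun _ x _ => ξ x) t' x' u' = 0 := by
    intro t' x' u'; simp [pt3]
  have X_u : ∀ t' x' u' : ℝ, pu3 (fun _ x _ => ξ x) t' x' u' = 0 := by
    intro t' x' u'; simp [pu3]
  have X_x : ∀ t' x' u' : ℝ, px3 (fun _ x _ => ξ x) t' x' u' = deriv ξ x' := by
    intro t' x' u'; simp [px3]
  have X_tt : pt3 (pt3 (fun _ x _ => ξ x)) t x u = 0 := by
    simp [pt3]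
  have X_xx : px3 (px3 (fun _ x _ => ξ x)) t x u = 2 * (a * (n + 1)) := by
    simp only [px3]
    exact hξ'' x
  -- partial derivatives of Eta
  have E_t : pt3 (fun _ x u => (a * x + b) * u) = fun _ _ _ => (0 : ℝ) := by
    funext t' x' u'; simp [pt3]
  have E_u : pu3 (fun _ x u => (a * x + b) * u) = fun _ x' _ => a * x' + b := by
    funext t' x' u'
    simp only [pu3]
    simpa using ((hasDerivAt_id u').const_mul (a * x' + b)).deriv
  have E_x : px3 (fun _ x u => (a * x + b) * u) = fun _ _ u' => a * u' := by
    funext t' x' u'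
    simp only [px3]
    have := (((hasDerivAt_id x').const_mul a).add_const b).mul_const u'
    simpa using this.deriv
  have E_uu : pu3 (pu3 (fun _ x u => (a * x + b) * u)) t x u = 0 := by
    rw [E_u]; simp [pu3]
  have E_tu : pt3 (pu3 (fun _ x u => (a * x + b) * u)) t x u = 0 := by
    rw [E_u]; simp [pt3]
  have E_xu : px3 (pu3 (fun _ x u => (a * x + b) * u)) t x u = a := by
    rw [E_u]
    simp only [px3]
    have := ((hasDerivAt_id x).const_mul a).add_const b
    simpa using this.deriv
  have E_tt : pt3 (pt3 (fun _ x u => (a * x + b) * u)) t x u = 0 := by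
    rw [E_t]; simp [pt3]
  have E_xx : px3 (px3 (fun _ x u => (a * x + b) * u)) t x u = 0 := by
    rw [E_x]; simp [px3]
  -- rpow identities
  have e1 : u ^ (n - 1) * u = u ^ n := by
    rw [← Real.rpow_add_one hux]; norm_num
  have e2 : u ^ (n - 2) * u = u ^ (n - 1) := by
    rw [← Real.rpow_add_one hux]; ring_nf
  have e3 : u ^ (m - 1) * u = u ^ m := by
    rw [← Real.rpow_add_one hux]; norm_num
  have E_tp : ∀ t' x' u' : ℝ, pt3 (fun _ x u => (a * x + b) * u) t' x' u' = 0 := by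
    intro t' x' u'; rw [E_t]
  have E_up : ∀ t' x' u' : ℝ, pu3 (fun _ x u => (a * x + b) * u) t' x' u' = a * x' + b := by
    intro t' x' u'; rw [E_u]
  have E_xp : ∀ t' x' u' : ℝ, px3 (fun _ x u => (a * x + b) * u) t' x' u' = a * u' := by
    intro t' x' u'; rw [E_x]
  refine ⟨X_u t x u, ?_, ?_, ?_, ?_⟩
  · simp only [X_t, X_x, hξ', hf']
    rw [← e1]
    field_simp
    ring
  · simp only [E_uu, X_x, E_up, hξ', hf']
    rw [← e1, ← e2]
    field_simp
    ring
  · simp only [X_tt, X_xx, E_uu, E_tu, E_xu, X_t, X_x, E_up, E_xp, hξ']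
    rw [← e1]
    field_simp
    ring
  · simp only [E_uu, E_tu, E_tt, E_xx, X_t, E_up, E_xp, hf', hh']
    rw [← e3]
    field_simp
    ring


end
end

section
/- Let n ∈ ℝ with n ≠ 0 and n ≠ −1, let r, p ∈ ℝ, let I ⊆ ℝ be an open interval and ξ : I → (0,∞) smooth. Let f : I → (0,∞) be differentiable with f'(x)/f(x) = −((3n+4)/(2n+2))·ξ'(x)/ξ(x) + r/ξ(x), set h(x) = (ξ'(x)² − 2ξ(x)ξ''(x) − p)/(4(n+1)ξ(x)²), set m = n+1, and set η(t,x,u) = (r/n + ξ'(x)/(2n+2))·u. Then ξ and η satisfy the determining system (E1)–(E5) identically for all t ∈ ℝ, x ∈ I and u > 0. -/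
open Real Set

set_option maxHeartbeats 1600000
noncomputable section

/-- case 1 of Table 1. For `m = n+1`,
`f = |ξ|^{−(3n+4)/(2n+2)} exp(r∫dx/ξ)` (encoded by its logarithmic derivative),
`h = (ξ'² − 2ξξ'' − p)/(4(n+1)ξ²)` and `η = (r/n + ξ'/(2n+2))u`, the determining system
(E1)–(E5) holds identically. -/
theorem table_case_1_verification
    (n r p : ℝ) (hn : n ≠ 0) (hn1 : n ≠ -1)
    (I : Set ℝ) (hI : IsOpen I) (hIc : I.OrdConnected)
    (ξ : ℝ → ℝ) (hξ : ContDiffOn ℝ (⊤ : ℕ∞) ξ I) (hξpos : ∀ x ∈ I, 0 < ξ x)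
    (f : ℝ → ℝ) (hfd : DifferentiableOn ℝ f I) (hfpos : ∀ x ∈ I, 0 < f x)
    (hfeq : ∀ x ∈ I,
      deriv f x / f x = -((3 * n + 4) / (2 * n + 2)) * deriv ξ x / ξ x + r / ξ x)
    (h : ℝ → ℝ)
    (hhdef : ∀ x ∈ I,
      h x = ((deriv ξ x) ^ 2 - 2 * ξ x * deriv (deriv ξ) x - p) / (4 * (n + 1) * (ξ x) ^ 2)) :
    DeterminingSystem n (n + 1) f h I (fun _ x _ => ξ x)
      (fun _ x u => (r / n + deriv ξ x / (2 * n + 2)) * u) := by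
  intro t x hx u hu
  have hn1' : n + 1 ≠ 0 := fun hc => hn1 (by linarith)
  have h2n2 : (2 : ℝ) * n + 2 ≠ 0 := fun hc => hn1 (by linarith)
  have hxne : ξ x ≠ 0 := (hξpos x hx).ne'
  have hfne : f x ≠ 0 := (hfpos x hx).ne'
  have hC1 : ContDiffOn ℝ (⊤ : ℕ∞) (deriv ξ) I := hξ.deriv_of_isOpen hI (le_of_eq rfl)
  have hC2 : ContDiffOn ℝ (⊤ : ℕ∞) (deriv (deriv ξ)) I := hC1.deriv_of_isOpen hI (le_of_eq rfl)
  have hdξ : ∀ y ∈ I, DifferentiableAt ℝ ξ y := fun y hy =>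
    (hξ.differentiableOn (by simp)).differentiableAt (hI.mem_nhds hy)
  have hd1 : ∀ y ∈ I, DifferentiableAt ℝ (deriv ξ) y := fun y hy =>
    (hC1.differentiableOn (by simp)).differentiableAt (hI.mem_nhds hy)
  have hd2 : ∀ y ∈ I, DifferentiableAt ℝ (deriv (deriv ξ)) y := fun y hy =>
    (hC2.differentiableOn (by simp)).differentiableAt (hI.mem_nhds hy)
  -- value of deriv f
  have hfval : deriv f x
      = (-((3 * n + 4) / (2 * n + 2)) * deriv ξ x / ξ x + r / ξ x) * f x :=
    (div_eq_iff hfne).mp (hfeq x hx)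
  -- derivative values for Xi
  have hXu : pu3 (fun _ x _ => ξ x) t x u = 0 := by simp [pu3]
  have hXt : pt3 (fun _ x _ => ξ x) t x u = 0 := by simp [pt3]
  have hXx : px3 (fun _ x _ => ξ x) t x u = deriv ξ x := rfl
  have hXtt : pt3 (pt3 (fun _ x _ => ξ x)) t x u = 0 := by simp [pt3]
  have hXxx : px3 (px3 (fun _ x _ => ξ x)) t x u = deriv (deriv ξ) x := rfl
  -- derivative values for Eta
  have hEufun : pu3 (fun _ x u => (r / n + deriv ξ x / (2 * n + 2)) * u)
      = fun _ y _ => r / n + deriv ξ y / (2 * n + 2) := by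
    funext s y v
    simp only [pu3]
    simpa using ((hasDerivAt_id v).const_mul (r / n + deriv ξ y / (2 * n + 2))).deriv
  have hEu : pu3 (fun _ x u => (r / n + deriv ξ x / (2 * n + 2)) * u) t x u
      = r / n + deriv ξ x / (2 * n + 2) := by rw [hEufun]
  have hEuu : pu3 (pu3 (fun _ x u => (r / n + deriv ξ x / (2 * n + 2)) * u)) t x u = 0 := by
    rw [hEufun]; simp [pu3]
  have hEtu : pt3 (pu3 (fun _ x u => (r / n + deriv ξ x / (2 * n + 2)) * u)) t x u = 0 := by
    rw [hEufun]; simp [pt3]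
  have hEt : pt3 (fun _ x u => (r / n + deriv ξ x / (2 * n + 2)) * u) t x u = 0 := by
    simp [pt3]
  have hEtt : pt3 (pt3 (fun _ x u => (r / n + deriv ξ x / (2 * n + 2)) * u)) t x u = 0 := by
    simp [pt3]
  have hExfun : ∀ v : ℝ, ∀ y ∈ I, HasDerivAt (fun z => (r / n + deriv ξ z / (2 * n + 2)) * v)
      ((deriv (deriv ξ) y / (2 * n + 2)) * v) y := fun v y hy =>
    ((((hd1 y hy).hasDerivAt).div_const (2 * n + 2)).const_add (r / n)).mul_const v
  have hEx : px3 (fun _ x u => (r / n + deriv ξ x / (2 * n + 2)) * u) t x u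
      = (deriv (deriv ξ) x / (2 * n + 2)) * u := by
    simp only [px3]; exact (hExfun u x hx).deriv
  have hExu : px3 (pu3 (fun _ x u => (r / n + deriv ξ x / (2 * n + 2)) * u)) t x u
      = deriv (deriv ξ) x / (2 * n + 2) := by
    rw [hEufun]; simp only [px3]
    exact ((((hd1 x hx).hasDerivAt).div_const (2 * n + 2)).const_add (r / n)).deriv
  have hExx : px3 (px3 (fun _ x u => (r / n + deriv ξ x / (2 * n + 2)) * u)) t x u
      = (deriv (deriv (deriv ξ)) x / (2 * n + 2)) * u := by
    simp only [px3]
    have heq : (fun y => deriv (fun z => (r / n + deriv ξ z / (2 * n + 2)) * u) y)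
        =ᶠ[nhds x] fun y => (deriv (deriv ξ) y / (2 * n + 2)) * u := by
      filter_upwards [hI.mem_nhds hx] with y hy
      exact (hExfun u y hy).deriv
    rw [heq.deriv_eq]
    exact ((((hd2 x hx).hasDerivAt).div_const (2 * n + 2)).mul_const u).deriv
  -- derivative of h
  have hden : 4 * (n + 1) * (ξ x) ^ 2 ≠ 0 := by
    apply mul_ne_zero (mul_ne_zero (by norm_num) hn1')
    exact pow_ne_zero _ hxne
  have hnum : HasDerivAt (fun y => (deriv ξ y) ^ 2 - 2 * ξ y * deriv (deriv ξ) y - p)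
      (2 * deriv ξ x * deriv (deriv ξ) x
        - (2 * deriv ξ x * deriv (deriv ξ) x + 2 * ξ x * deriv (deriv (deriv ξ)) x)) x := by
    have h1 := (hd1 x hx).hasDerivAt.pow 2
    have h2 := ((hdξ x hx).hasDerivAt.const_mul 2).mul (hd2 x hx).hasDerivAt
    have h3 := (h1.sub h2).sub_const p
    refine h3.congr_deriv ?_
    push_cast
    ring
  have hdenD : HasDerivAt (fun y => 4 * (n + 1) * (ξ y) ^ 2)
      (4 * (n + 1) * (2 * ξ x * deriv ξ x)) x := by
    have := ((hdξ x hx).hasDerivAt.pow 2).const_mul (4 * (n + 1))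
    refine this.congr_deriv ?_
    push_cast
    ring
  have hhd : deriv h x =
      ((2 * deriv ξ x * deriv (deriv ξ) x
         - (2 * deriv ξ x * deriv (deriv ξ) x + 2 * ξ x * deriv (deriv (deriv ξ)) x))
        * (4 * (n + 1) * (ξ x) ^ 2)
        - ((deriv ξ x) ^ 2 - 2 * ξ x * deriv (deriv ξ) x - p)
          * (4 * (n + 1) * (2 * ξ x * deriv ξ x)))
      / (4 * (n + 1) * (ξ x) ^ 2) ^ 2 := by
    have hH : h =ᶠ[nhds x] fun y =>
        ((deriv ξ y) ^ 2 - 2 * ξ y * deriv (deriv ξ) y - p) / (4 * (n + 1) * (ξ y) ^ 2) := by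
      filter_upwards [hI.mem_nhds hx] with y hy
      exact hhdef y hy
    rw [hH.deriv_eq]
    exact (hnum.div hdenD hden).deriv
  -- power identities
  have hp0 : ∀ s : ℝ, u ^ (s + 1) = u ^ s * u := fun s => by
    rw [Real.rpow_add hu, Real.rpow_one]
  have e1 : u ^ n = u ^ (n - 1) * u := by rw [← hp0]; congr 1; ring
  have e2 : u ^ (n - 1) = u ^ (n - 2) * u := by rw [← hp0]; congr 1; ring
  have e3 : u ^ (n + 1) = u ^ n * u := hp0 n
  have e4 : u ^ (n + 1 - 1) = u ^ n := by congr 1; ring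
  refine ⟨hXu, ?_, ?_, ?_, ?_⟩
  · -- (E2)
    rw [hXt, hXx]
    beta_reduce
    rw [hfval, e1, e2]
    field_simp
    ring
  · -- (E3)
    rw [hXx, hEu, hEuu]
    beta_reduce
    rw [hfval, e1, e2]
    field_simp
    ring
  · -- (E4)
    rw [hXt, hXx, hEu, hEuu, hEtu, hEx, hExu, hXtt, hXxx]
    beta_reduce
    rw [e1, e2]
    field_simp
    ring
  · -- (E5)
    rw [hXt, hEu, hEuu, hEtu, hEx, hExx, hEtt, hhd]
    beta_reduce
    rw [hhdef x hx, hfval, e3, e4, e1, e2]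
    field_simp
    ring
end
end

section
/- Let I ⊆ ℝ be an open interval, ξ : I → (0,∞) smooth, Ξ : I → ℝ with Ξ'(x) = 1/ξ(x), and c₁, c₂ ∈ ℝ. Let Ω = {(t,x) ∈ ℝ × I : 1 + 2(c₁(t − Ξ(x)) + c₂) > 0}. For either choice of sign, define u(t,x) = (1 ± √(1 + 2(c₁(t − Ξ(x)) + c₂)))·ξ(x)^{1/4} on Ω. Then u satisfies ξ(x)^{−7/4}·u_tt − ∂_x(u·u_x) − ((ξ'(x)² − 2ξ(x)ξ''(x))/(8ξ(x)²))·u² = 0 at every point of Ω. -/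
open Real Set Topology Filter

set_option maxHeartbeats 1000000

noncomputable section

/-- The explicit function
`u(t,x) = (1 ± √(1 + 2(c₁(t − Ξ(x)) + c₂)))·ξ(x)^{1/4}` solves
`ξ^{−7/4}u_tt − (uu_x)_x − ((ξ'² − 2ξξ'')/(8ξ²))u² = 0` wherever
`1 + 2(c₁(t − Ξ(x)) + c₂) > 0`. -/
theorem exact_solution_r_zero
    (I : Set ℝ) (hI : IsOpen I) (hIc : I.OrdConnected)
    (ξ : ℝ → ℝ) (hξ : ContDiffOn ℝ (⊤ : ℕ∞) ξ I) (hξpos : ∀ x ∈ I, 0 < ξ x)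
    (Ξ : ℝ → ℝ) (hΞ : ∀ x ∈ I, HasDerivAt Ξ (1 / ξ x) x)
    (c₁ c₂ : ℝ) (ε : ℝ) (hε : ε = 1 ∨ ε = -1)
    (u : ℝ → ℝ → ℝ)
    (hudef : ∀ t : ℝ, ∀ x ∈ I,
      u t x = (1 + ε * Real.sqrt (1 + 2 * (c₁ * (t - Ξ x) + c₂))) * ξ x ^ ((1 : ℝ) / 4)) :
    ∀ t : ℝ, ∀ x ∈ I, 0 < 1 + 2 * (c₁ * (t - Ξ x) + c₂) →
      ξ x ^ (-(7 : ℝ) / 4) * pt2 (pt2 u) t x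
        - deriv (fun y => u t y * px2 u t y) x
        - (((deriv ξ x) ^ 2 - 2 * ξ x * deriv (deriv ξ) x) / (8 * (ξ x) ^ 2)) * (u t x) ^ 2
        = 0 := by
  -- derivatives of ξ
  have hξd : ∀ y ∈ I, HasDerivAt ξ (deriv ξ y) y := fun y hy =>
    ((hξ.differentiableOn (by norm_num)).differentiableAt (hI.mem_nhds hy)).hasDerivAt
  have hdξ : ContDiffOn ℝ (⊤ : ℕ∞) (deriv ξ) I :=
    hξ.deriv_of_isOpen hI (le_of_eq rfl)
  have hξd2 : ∀ y ∈ I, HasDerivAt (deriv ξ) (deriv (deriv ξ) y) y := fun y hy =>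
    ((hdξ.differentiableOn (by norm_num)).differentiableAt (hI.mem_nhds hy)).hasDerivAt
  intro t x hx hA
  have hB := hξpos x hx
  have hS : 0 < Real.sqrt (1 + 2 * (c₁ * (t - Ξ x) + c₂)) := Real.sqrt_pos.2 hA
  -- spatial first derivative at any good point
  have key : ∀ y ∈ I, 0 < 1 + 2 * (c₁ * (t - Ξ y) + c₂) →
      HasDerivAt (fun z => u t z)
        ((1 + ε * Real.sqrt (1 + 2 * (c₁ * (t - Ξ y) + c₂))) *
            ((1:ℝ)/4 * ξ y ^ ((1:ℝ)/4 - 1) * deriv ξ y)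
          - ε * c₁ * (ξ y ^ ((1:ℝ)/4 - 1) / Real.sqrt (1 + 2 * (c₁ * (t - Ξ y) + c₂)))) y := by
    intro y hy hAy
    have hξy := hξpos y hy
    have hAd : HasDerivAt (fun z => 1 + 2 * (c₁ * (t - Ξ z) + c₂)) (2 * (c₁ * -(1 / ξ y))) y :=
      (((((hΞ y hy).const_sub t).const_mul c₁).add_const c₂).const_mul 2).const_add 1
    have hsd := hAd.sqrt hAy.ne'
    have hφ := (hsd.const_mul ε).const_add 1
    have hpd : HasDerivAt (fun z => ξ z ^ ((1:ℝ)/4))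
        (deriv ξ y * ((1:ℝ)/4) * ξ y ^ ((1:ℝ)/4 - 1)) y :=
      (hξd y hy).rpow_const (Or.inl hξy.ne')
    have hmul := hφ.mul hpd
    have hev : (fun z => u t z) =ᶠ[𝓝 y]
        (fun z => (1 + ε * Real.sqrt (1 + 2 * (c₁ * (t - Ξ z) + c₂))) * ξ z ^ ((1:ℝ)/4)) := by
      filter_upwards [hI.mem_nhds hy] with z hz using hudef t z hz
    refine (hmul.congr_of_eventuallyEq hev).congr_deriv ?_
    rw [Real.rpow_sub_one hξy.ne']
    field_simp
    ring
  -- the neighborhood where everything is nice (spatial)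
  have hct : ContinuousAt (fun y => 1 + 2 * (c₁ * (t - Ξ y) + c₂)) x := by
    have := ((hΞ x hx).continuousAt)
    fun_prop
  have hO : ∀ᶠ y in 𝓝 x, y ∈ I ∧ 0 < 1 + 2 * (c₁ * (t - Ξ y) + c₂) := by
    have h1 : ∀ᶠ y in 𝓝 x, y ∈ I := hI.mem_nhds hx
    have h2 : ∀ᶠ y in 𝓝 x, 0 < 1 + 2 * (c₁ * (t - Ξ y) + c₂) :=
      hct.eventually (eventually_gt_nhds hA)
    exact h1.and h2
  -- time first derivative at any good time
  have tkey : ∀ s : ℝ, 0 < 1 + 2 * (c₁ * (s - Ξ x) + c₂) →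
      HasDerivAt (fun r => u r x)
        (ε * c₁ * ξ x ^ ((1:ℝ)/4) * (Real.sqrt (1 + 2 * (c₁ * (s - Ξ x) + c₂)))⁻¹) s := by
    intro s hs
    have base : HasDerivAt (fun r => 1 + 2 * (c₁ * (r - Ξ x) + c₂)) (2 * (c₁ * 1)) s :=
      (((((hasDerivAt_id s).sub_const (Ξ x)).const_mul c₁).add_const c₂).const_mul 2).const_add 1
    have hmul := (((base.sqrt hs.ne').const_mul ε).const_add 1).mul_const (ξ x ^ ((1:ℝ)/4))
    have heq : (fun r => u r x) =
        (fun r => (1 + ε * Real.sqrt (1 + 2 * (c₁ * (r - Ξ x) + c₂))) * ξ x ^ ((1:ℝ)/4)) :=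
      funext fun r => hudef r x hx
    rw [heq]
    refine hmul.congr_deriv ?_
    have hSs : Real.sqrt (1 + 2 * (c₁ * (s - Ξ x) + c₂)) ≠ 0 := (Real.sqrt_pos.2 hs).ne'
    field_simp
  -- second time derivative
  have hctt : ContinuousAt (fun s => 1 + 2 * (c₁ * (s - Ξ x) + c₂)) t := by fun_prop
  have hOt : ∀ᶠ s in 𝓝 t, 0 < 1 + 2 * (c₁ * (s - Ξ x) + c₂) :=
    hctt.eventually (eventually_gt_nhds hA)
  have hTev : (fun s => deriv (fun r => u r x) s) =ᶠ[𝓝 t]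
      (fun s => ε * c₁ * ξ x ^ ((1:ℝ)/4) *
        (Real.sqrt (1 + 2 * (c₁ * (s - Ξ x) + c₂)))⁻¹) := by
    filter_upwards [hOt] with s hs using (tkey s hs).deriv
  have baset : HasDerivAt (fun s => 1 + 2 * (c₁ * (s - Ξ x) + c₂)) (2 * (c₁ * 1)) t :=
    (((((hasDerivAt_id t).sub_const (Ξ x)).const_mul c₁).add_const c₂).const_mul 2).const_add 1
  have hTT : pt2 (pt2 u) t x =
      ε * c₁ * ξ x ^ ((1:ℝ)/4) *
        (-(2 * (c₁ * 1) / (2 * Real.sqrt (1 + 2 * (c₁ * (t - Ξ x) + c₂)))) /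
          Real.sqrt (1 + 2 * (c₁ * (t - Ξ x) + c₂)) ^ 2) := by
    simp only [pt2]
    rw [hTev.deriv_eq]
    exact (((baset.sqrt hA.ne').inv hS.ne').const_mul (ε * c₁ * ξ x ^ ((1:ℝ)/4))).deriv
  -- spatial second-order part
  have hAd : HasDerivAt (fun z => 1 + 2 * (c₁ * (t - Ξ z) + c₂)) (2 * (c₁ * -(1 / ξ x))) x :=
    (((((hΞ x hx).const_sub t).const_mul c₁).add_const c₂).const_mul 2).const_add 1
  have hsd := hAd.sqrt hA.ne'
  have hφ := (hsd.const_mul ε).const_add 1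
  have hp1 : HasDerivAt (fun z => ξ z ^ ((1:ℝ)/4))
      (deriv ξ x * ((1:ℝ)/4) * ξ x ^ ((1:ℝ)/4 - 1)) x :=
    (hξd x hx).rpow_const (Or.inl hB.ne')
  have hp2 : HasDerivAt (fun z => ξ z ^ ((1:ℝ)/4 - 1))
      (deriv ξ x * ((1:ℝ)/4 - 1) * ξ x ^ ((1:ℝ)/4 - 1 - 1)) x :=
    (hξd x hx).rpow_const (Or.inl hB.ne')
  have hu1 := hφ.mul hp1
  have hin1 := (hp2.const_mul ((1:ℝ)/4)).mul (hξd2 x hx)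
  have hin2 := hφ.mul hin1
  have hin3 := (hp2.div hsd hS.ne').const_mul (ε * c₁)
  have hF := hu1.mul (hin2.sub hin3)
  have hFev : (fun y => u t y * px2 u t y) =ᶠ[𝓝 x]
      (fun y => (1 + ε * Real.sqrt (1 + 2 * (c₁ * (t - Ξ y) + c₂))) * ξ y ^ ((1:ℝ)/4) *
        ((1 + ε * Real.sqrt (1 + 2 * (c₁ * (t - Ξ y) + c₂))) *
            ((1:ℝ)/4 * ξ y ^ ((1:ℝ)/4 - 1) * deriv ξ y)
          - ε * c₁ * (ξ y ^ ((1:ℝ)/4 - 1) / Real.sqrt (1 + 2 * (c₁ * (t - Ξ y) + c₂))))) := by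
    filter_upwards [hO] with y hy
    simp only [px2]
    rw [hudef t y hy.1, (key y hy.1 hy.2).deriv]
  have hXX := hFev.deriv_eq.trans hF.deriv
  rw [hTT, hXX, hudef t x hx]
  -- algebra
  have e2 : ξ x ^ ((1:ℝ)/4 - 1) = ξ x ^ ((1:ℝ)/4) / ξ x := Real.rpow_sub_one hB.ne' _
  have e3 : ξ x ^ ((1:ℝ)/4 - 1 - 1) = ξ x ^ ((1:ℝ)/4) / ξ x / ξ x := by
    rw [Real.rpow_sub_one hB.ne', Real.rpow_sub_one hB.ne']
  have e1 : ξ x ^ (-(7:ℝ) / 4) = ξ x ^ ((1:ℝ)/4) / ξ x / ξ x := by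
    rw [show (-(7:ℝ)/4) = (1:ℝ)/4 - 1 - 1 by norm_num, Real.rpow_sub_one hB.ne',
      Real.rpow_sub_one hB.ne']
  simp only [Pi.mul_apply, Pi.div_apply, Pi.sub_apply]
  rw [e1, e2, e3]
  set S := Real.sqrt (1 + 2 * (c₁ * (t - Ξ x) + c₂)) with hSdef
  set P := ξ x ^ ((1:ℝ)/4) with hPdef
  set B := ξ x with hBdef
  set d1 := deriv ξ x
  set d2 := deriv (deriv ξ) x
  rcases hε with rfl | rfl <;>
  · field_simp
    ring

end
end

section
/- Let I ⊆ ℝ be an open interval, ξ : I → (0,∞) smooth, Ξ : I → ℝ with Ξ'(x) = 1/ξ(x), and r, c₁ ∈ ℝ. Let φ : ℝ → (0,∞) be twice differentiable with φ'(ω)·(φ(ω) − 1) = 2r·φ(ω)² + c₁ for all ω ∈ ℝ. Define u(t,x) = φ(t − Ξ(x))·ξ(x)^{1/4}·exp(r·Ξ(x)). Then u satisfies ξ(x)^{−7/4}·exp(r·Ξ(x))·u_tt − ∂_x(u·u_x) − ((ξ'(x)² − 2ξ(x)ξ''(x) − 16r²)/(8ξ(x)²))·u² = 0 on ℝ ×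 I. -/
open Real Set

noncomputable section

set_option maxHeartbeats 1000000 in
/-- If `φ > 0` is twice differentiable with `φ'(φ − 1) = 2rφ² + c₁`,
then `u(t,x) = φ(t − Ξ(x))·ξ(x)^{1/4}·e^{rΞ(x)}` solves
`ξ^{−7/4}e^{rΞ}u_tt − (uu_x)_x − ((ξ'² − 2ξξ'' − 16r²)/(8ξ²))u² = 0` on `ℝ × I`. -/
theorem exact_solution_r_nonzero
    (I : Set ℝ) (hI : IsOpen I) (hIc : I.OrdConnected)
    (ξ : ℝ → ℝ) (hξ : ContDiffOn ℝ (⊤ : ℕ∞) ξ I) (hξpos : ∀ x ∈ I, 0 < ξ x)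
    (Ξ : ℝ → ℝ) (hΞ : ∀ x ∈ I, HasDerivAt Ξ (1 / ξ x) x)
    (r c₁ : ℝ)
    (φ φ' φ'' : ℝ → ℝ) (hφpos : ∀ ω : ℝ, 0 < φ ω)
    (hd1 : ∀ ω : ℝ, HasDerivAt φ (φ' ω) ω) (hd2 : ∀ ω : ℝ, HasDerivAt φ' (φ'' ω) ω)
    (hFI : ∀ ω : ℝ, φ' ω * (φ ω - 1) = 2 * r * (φ ω) ^ 2 + c₁)
    (u : ℝ → ℝ → ℝ)
    (hudef : ∀ t : ℝ, ∀ x ∈ I,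
      u t x = φ (t - Ξ x) * ξ x ^ ((1 : ℝ) / 4) * Real.exp (r * Ξ x)) :
    ∀ t : ℝ, ∀ x ∈ I,
      ξ x ^ (-(7 : ℝ) / 4) * Real.exp (r * Ξ x) * pt2 (pt2 u) t x
        - deriv (fun y => u t y * px2 u t y) x
        - (((deriv ξ x) ^ 2 - 2 * ξ x * deriv (deriv ξ) x - 16 * r ^ 2)
            / (8 * (ξ x) ^ 2)) * (u t x) ^ 2
        = 0 := by
  -- first integral differentiated
  have key : ∀ w : ℝ, φ'' w * (φ w - 1) + φ' w ^ 2 = 4 * r * (φ w * φ' w) := by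
    intro w
    have h1 : HasDerivAt (fun z => φ' z * (φ z - 1))
        (φ'' w * (φ w - 1) + φ' w * φ' w) w := (hd2 w).mul ((hd1 w).sub_const 1)
    have h2 : HasDerivAt (fun z => 2 * r * φ z ^ 2 + c₁)
        (2 * r * ((2 : ℕ) * φ w ^ 1 * φ' w)) w :=
      (((hd1 w).pow 2).const_mul (2 * r)).add_const c₁
    rw [show (fun z => φ' z * (φ z - 1)) = fun z => 2 * r * φ z ^ 2 + c₁ from
      funext hFI] at h1
    have := h1.unique h2
    simp only [pow_one, Nat.cast_ofNat] at this
    nlinarith [this]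
  have hsm : ∀ y ∈ I, HasDerivAt ξ (deriv ξ y) y := fun y hy =>
    (((hξ.differentiableOn (by simp)).differentiableAt
      (hI.mem_nhds hy))).hasDerivAt
  have hξ' : ContDiffOn ℝ (⊤ : ℕ∞) (deriv ξ) I :=
    hξ.deriv_of_isOpen hI (by exact_mod_cast le_top)
  have hsm2 : ∀ y ∈ I, HasDerivAt (deriv ξ) (deriv (deriv ξ) y) y := fun y hy =>
    (((hξ'.differentiableOn (by simp)).differentiableAt
      (hI.mem_nhds hy))).hasDerivAt
  intro t x hx
  set V : ℝ → ℝ := fun y => φ (t - Ξ y) * ξ y ^ ((1 : ℝ) / 4) * Real.exp (r * Ξ y)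
    with hVdef
  set V' : ℝ → ℝ := fun y =>
    (φ' (t - Ξ y) * (-(ξ y)⁻¹) * ξ y ^ ((1 : ℝ) / 4)
      + φ (t - Ξ y) * ((1 : ℝ) / 4 * ξ y ^ ((1 : ℝ) / 4 - 1) * deriv ξ y)
      + φ (t - Ξ y) * ξ y ^ ((1 : ℝ) / 4) * (r * (ξ y)⁻¹)) * Real.exp (r * Ξ y)
    with hV'def
  -- derivative of V on I
  have hVd : ∀ y ∈ I, HasDerivAt V (V' y) y := by
    intro y hy
    have hny := (hξpos y hy).ne'
    have hΞy := hΞ y hy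
    have hω : HasDerivAt (fun z => t - Ξ z) (0 - 1 / ξ y) y :=
      (hasDerivAt_const y t).sub hΞy
    have hφy : HasDerivAt (fun z => φ (t - Ξ z)) (φ' (t - Ξ y) * (0 - 1 / ξ y)) y :=
      (hd1 _).comp y hω
    have hA : HasDerivAt (fun z => ξ z ^ ((1 : ℝ) / 4))
        (deriv ξ y * ((1 : ℝ) / 4) * ξ y ^ ((1 : ℝ) / 4 - 1)) y :=
      (hsm y hy).rpow_const (Or.inl hny)
    have hE : HasDerivAt (fun z => Real.exp (r * Ξ z))
        (Real.exp (r * Ξ y) * (r * (1 / ξ y))) y := (hΞy.const_mul r).exp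
    have h := (hφy.mul hA).mul hE
    refine h.congr_deriv ?_
    simp only [hV'def, Pi.mul_apply]
    field_simp
    ring
  -- px2 u = V' on I
  have hpx : ∀ y ∈ I, px2 u t y = V' y := by
    intro y hy
    have heq : (fun z => u t z) =ᶠ[nhds y] V := by
      filter_upwards [hI.mem_nhds hy] with z hz
      rw [hudef t z hz, hVdef]
    rw [px2, heq.deriv_eq]
    exact (hVd y hy).deriv
  have hs : 0 < ξ x := hξpos x hx
  have hn : ξ x ≠ 0 := hs.ne'
  -- second spatial derivative: HasDerivAt V' W x
  have hΞx := hΞ x hx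
  have hω : HasDerivAt (fun z => t - Ξ z) (0 - 1 / ξ x) x :=
    (hasDerivAt_const x t).sub hΞx
  have hφx : HasDerivAt (fun z => φ (t - Ξ z)) (φ' (t - Ξ x) * (0 - 1 / ξ x)) x :=
    (hd1 _).comp x hω
  have hφ'x : HasDerivAt (fun z => φ' (t - Ξ z)) (φ'' (t - Ξ x) * (0 - 1 / ξ x)) x :=
    (hd2 _).comp x hω
  have hA : HasDerivAt (fun z => ξ z ^ ((1 : ℝ) / 4))
      (deriv ξ x * ((1 : ℝ) / 4) * ξ x ^ ((1 : ℝ) / 4 - 1)) x :=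
    (hsm x hx).rpow_const (Or.inl hn)
  have hA1 : HasDerivAt (fun z => ξ z ^ ((1 : ℝ) / 4 - 1))
      (deriv ξ x * ((1 : ℝ) / 4 - 1) * ξ x ^ ((1 : ℝ) / 4 - 1 - 1)) x :=
    (hsm x hx).rpow_const (Or.inl hn)
  have hE : HasDerivAt (fun z => Real.exp (r * Ξ z))
      (Real.exp (r * Ξ x) * (r * (1 / ξ x))) x := (hΞx.const_mul r).exp
  have hinv : HasDerivAt (fun z => (ξ z)⁻¹) (-(deriv ξ x) / ξ x ^ 2) x :=
    (hsm x hx).inv hn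
  have hW : HasDerivAt V'
      (Real.exp (r * Ξ x) *
        (φ'' (t - Ξ x) * ξ x ^ ((1:ℝ)/4) / ξ x ^ 2
         + φ' (t - Ξ x) * deriv ξ x * ξ x ^ ((1:ℝ)/4) / ξ x ^ 2
         - (1:ℝ)/2 * φ' (t - Ξ x) * ξ x ^ ((1:ℝ)/4 - 1) * deriv ξ x / ξ x
         + (1:ℝ)/4 * ((1:ℝ)/4 - 1) * φ (t - Ξ x) * ξ x ^ ((1:ℝ)/4 - 1 - 1) * deriv ξ x ^ 2
         + (1:ℝ)/4 * φ (t - Ξ x) * ξ x ^ ((1:ℝ)/4 - 1) * deriv (deriv ξ) x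
         - 2 * r * φ' (t - Ξ x) * ξ x ^ ((1:ℝ)/4) / ξ x ^ 2
         + (1:ℝ)/2 * r * φ (t - Ξ x) * ξ x ^ ((1:ℝ)/4 - 1) * deriv ξ x / ξ x
         - r * φ (t - Ξ x) * ξ x ^ ((1:ℝ)/4) * deriv ξ x / ξ x ^ 2
         + r ^ 2 * φ (t - Ξ x) * ξ x ^ ((1:ℝ)/4) / ξ x ^ 2)) x := by
    have ht1 := (hφ'x.mul hinv.neg).mul hA
    have ht2 := hφx.mul ((hA1.const_mul ((1:ℝ)/4)).mul (hsm2 x hx))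
    have ht3 := (hφx.mul hA).mul (hinv.const_mul r)
    have hP := (ht1.add ht2).add ht3
    have h := hP.mul hE
    refine h.congr_deriv ?_
    simp only [Pi.mul_apply, Pi.neg_apply, Pi.add_apply]
    field_simp
    ring
  have hprod : HasDerivAt (fun y => V y * V' y) _ x := (hVd x hx).mul hW
  have e1 : (fun y => u t y * px2 u t y) =ᶠ[nhds x] (fun y => V y * V' y) := by
    filter_upwards [hI.mem_nhds hx] with z hz
    rw [hudef t z hz, hpx z hz, hVdef]
  have e2 := e1.deriv_eq.trans hprod.deriv
  -- time derivatives
  have hpt1 : ∀ s : ℝ, pt2 u s x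
      = φ' (s - Ξ x) * (ξ x ^ ((1 : ℝ) / 4) * Real.exp (r * Ξ x)) := by
    intro s
    have hfs : (fun s' => u s' x)
        = fun s' => φ (s' - Ξ x) * (ξ x ^ ((1 : ℝ) / 4) * Real.exp (r * Ξ x)) := by
      funext s'; rw [hudef s' x hx]; ring
    have h : HasDerivAt
        (fun s' => φ (s' - Ξ x) * (ξ x ^ ((1 : ℝ) / 4) * Real.exp (r * Ξ x)))
        ((φ' (s - Ξ x) * 1) * (ξ x ^ ((1 : ℝ) / 4) * Real.exp (r * Ξ x))) s :=
      (((hd1 _).comp s ((hasDerivAt_id s).sub_const _)).mul_const _)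
    rw [pt2, hfs, h.deriv]; ring
  have hpt2 : pt2 (pt2 u) t x
      = φ'' (t - Ξ x) * (ξ x ^ ((1 : ℝ) / 4) * Real.exp (r * Ξ x)) := by
    have hfs : (fun s => pt2 u s x)
        = fun s => φ' (s - Ξ x) * (ξ x ^ ((1 : ℝ) / 4) * Real.exp (r * Ξ x)) :=
      funext hpt1
    have h : HasDerivAt
        (fun s => φ' (s - Ξ x) * (ξ x ^ ((1 : ℝ) / 4) * Real.exp (r * Ξ x)))
        ((φ'' (t - Ξ x) * 1) * (ξ x ^ ((1 : ℝ) / 4) * Real.exp (r * Ξ x))) t :=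
      (((hd2 _).comp t ((hasDerivAt_id t).sub_const _)).mul_const _)
    rw [pt2, hfs, h.deriv]; ring
  -- rpow simplifications
  have e3 : ξ x ^ ((1:ℝ)/4 - 1) = ξ x ^ ((1:ℝ)/4) / ξ x := by
    rw [Real.rpow_sub hs, Real.rpow_one]
  have e4 : ξ x ^ ((1:ℝ)/4 - 1 - 1) = ξ x ^ ((1:ℝ)/4) / (ξ x * ξ x) := by
    rw [Real.rpow_sub hs, Real.rpow_sub hs, Real.rpow_one, div_div]
  have e5 : ξ x ^ (-(7:ℝ)/4) = ξ x ^ ((1:ℝ)/4) / (ξ x * ξ x) := by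
    rw [show (-(7:ℝ)/4) = (1:ℝ)/4 - 2 by norm_num, Real.rpow_sub hs,
      show ((2:ℝ)) = ((2:ℕ):ℝ) by norm_num, Real.rpow_natCast]
    ring
  rw [hpt2, e2, e5, hudef t x hx, hV'def, hVdef]
  simp only []
  rw [e3, e4]
  have hkey := key (t - Ξ x)
  have hexp := Real.exp_ne_zero (r * Ξ x)
  have hApos : (0:ℝ) < ξ x ^ ((1:ℝ)/4) := Real.rpow_pos_of_pos hs _
  have hkey := key (t - Ξ x)
  field_simp
  linear_combination (-(256:ℝ) * (ξ x ^ ((1:ℝ)/4)) ^ 2 * Real.exp (r * Ξ x) ^ 2) * hkey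


end
end

section
/- Let n, m ∈ ℝ with n ≠ 0 and n ≠ −1, and let ε₁, ε₂, ε₃, ε₄, ε₅, ε₆, ε₇ ∈ ℝ with ε₁ ≠ 0, ε₇ > 0 and ε₃ε₆ − ε₄ε₅ = 1. Let I ⊆ ℝ be an open interval on which ε₅x + ε₆ ≠ 0, let X(x) = (ε₃x + ε₄)/(ε₅x + ε₆) (so X'(x) = 1/(ε₅x + ε₆)² > 0 and X is a diffeomorphism of I onto X(I)), let f : I → (0,∞) and h : I → ℝ be smooth, and let u : ℝ × I → (0,∞) be a smooth solution of f(x)u_tt = ∂_x(uⁿu_x) + h(x)uᵐ. Define ũ on ℝ × X(I) by ũ(ε₁t + ε₂, X(x)) = ε₇·X'(x)^{1/(2n+2)}·u(t,x), and define f̃, h̃ on X(I) by f̃(X(x)) = ε₁²·ε₇ⁿ·X'(x)^{−(3n+4)/(2n+2)}·f(x) and h̃(X(x)) = ε₇^{n+1−m}·X'(x)^{−(m+3n+3)/(2n+2)}·h(x). Then ũ satisfies f̃(x̃)·ũ_t̃t̃ = ∂_x̃(ũⁿũ_x̃) + h̃(x̃)·ũᵐ on ℝ × X(I). -/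
open Real Set

noncomputable section

lemma moeb_hasDerivAt (A B C D x : ℝ) (hdet : A*D - B*C = 1) (hx : C*x + D ≠ 0) :
    HasDerivAt (fun y => (A*y+B)/(C*y+D)) (1/(C*x+D)^2) x := by
  have h1 : HasDerivAt (fun y : ℝ => A*y+B) (A*1) x := ((hasDerivAt_id x).const_mul A).add_const B
  have h2 : HasDerivAt (fun y : ℝ => C*y+D) (C*1) x := ((hasDerivAt_id x).const_mul C).add_const D
  have h := h1.div h2 hx
  have h3 : A*1*(C*x+D) - (A*x+B)*(C*1) = 1 := by linear_combination hdet
  rw [h3] at h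
  exact h

lemma key_algebra (a n e E1 P R T M k kn km W Wn Wm W1 W2 f utt h : ℝ)
    (hP : P ≠ 0) (hW : W ≠ 0) (hk : k ≠ 0) (hT : T ≠ 0) (hM : M ≠ 0) (hkm : km ≠ 0)
    (hE1 : E1 ≠ 0)
    (haa : a * n + a = 1/2)
    (hfu : f * utt = Wn/W * W1 * (n*W1) + Wn*W2 + h*Wm) :
    E1^2 * kn * (R*P^4/T) * f * (k * T / E1^2 * utt)
      = ( (k*(a*(T*P^2)*(-2*e/P^3)*W + T*W1) * n * (kn/k * (R/(T*T)) * (Wn/W)))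
            * ((k*(a*(T*P^2)*(-2*e/P^3)*W + T*W1)) * P^2)
        + (kn * (R/T) * Wn)
            * ((k*((a*(a-1)*(T*P^4)*(-2*e/P^3)*(-2*e/P^3) + (0*P^3 - -2*e*(3*P^2*e))/(P^3)^2*a*(T*P^2))*W
                  + a*(T*P^2)*(-2*e/P^3)*W1 + (a*(T*P^2)*(-2*e/P^3)*W1 + T*W2))) * P^2
                + (k*(a*(T*P^2)*(-2*e/P^3)*W + T*W1)) * (2*P*e))) * P^2
        + (kn*k/km) * (R*P^4/M) * h * (km * (M * Wm)) := by
  have ha0 : a ≠ 0 := by rintro rfl; norm_num at haa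
  have hnv : n = 1/(2*a) - 1 := by field_simp; linarith
  subst hnv
  have h1 : f * utt = Wn/W * W1 * ((1/(2*a)-1)*W1) + Wn*W2 + h*Wm := hfu
  field_simp at h1 ⊢
  linear_combination (kn*R*P^2) * h1

/-- equivalence group `G₁∼`, case `n ≠ −1`. The point transformation
`ttld = ε₁t + ε₂`, `xtld = (ε₃x + ε₄)/(ε₅x + ε₆)`, `utld = ε₇ X_x^{1/(2n+2)} u` (with
`ε₃ε₆ − ε₄ε₅ = 1`, so `X' = 1/(ε₅x + ε₆)² > 0`) maps positive smooth solutions of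
`f u_tt = (uⁿu_x)_x + h uᵐ` to solutions of the equation with transformed arbitrary
elements `ftld, htld`. -/
theorem equivalence_group_n_ne_neg_one
    (n m : ℝ) (hn : n ≠ 0) (hn1 : n ≠ -1)
    (ε₁ ε₂ ε₃ ε₄ ε₅ ε₆ ε₇ : ℝ) (hε₁ : ε₁ ≠ 0) (hε₇ : 0 < ε₇)
    (hdet : ε₃ * ε₆ - ε₄ * ε₅ = 1)
    (I : Set ℝ) (hI : IsOpen I) (hIc : I.OrdConnected)
    (hden : ∀ x ∈ I, ε₅ * x + ε₆ ≠ 0)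
    (X : ℝ → ℝ) (hXdef : ∀ x : ℝ, X x = (ε₃ * x + ε₄) / (ε₅ * x + ε₆))
    (f h : ℝ → ℝ) (hf : ContDiffOn ℝ (⊤ : ℕ∞) f I) (hh : ContDiffOn ℝ (⊤ : ℕ∞) h I)
    (hfpos : ∀ x ∈ I, 0 < f x)
    (u : ℝ → ℝ → ℝ)
    (hu : ContDiffOn ℝ (⊤ : ℕ∞) (fun p : ℝ × ℝ => u p.1 p.2) (univ ×ˢ I))
    (hupos : ∀ t : ℝ, ∀ x ∈ I, 0 < u t x)
    (hsol : ∀ t : ℝ, ∀ x ∈ I,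
      f x * pt2 (pt2 u) t x
        = deriv (fun y => (u t y) ^ n * px2 u t y) x + h x * (u t x) ^ m)
    (utld : ℝ → ℝ → ℝ) (ftld htld : ℝ → ℝ)
    (hutlddef : ∀ t : ℝ, ∀ x ∈ I,
      utld (ε₁ * t + ε₂) (X x)
        = ε₇ * (1 / (ε₅ * x + ε₆) ^ 2) ^ ((1 : ℝ) / (2 * n + 2)) * u t x)
    (hftlddef : ∀ x ∈ I,
      ftld (X x) = ε₁ ^ 2 * ε₇ ^ n
        * (1 / (ε₅ * x + ε₆) ^ 2) ^ (-(3 * n + 4) / (2 * n + 2)) * f x)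
    (hhtlddef : ∀ x ∈ I,
      htld (X x) = ε₇ ^ (n + 1 - m)
        * (1 / (ε₅ * x + ε₆) ^ 2) ^ (-(m + 3 * n + 3) / (2 * n + 2)) * h x) :
    (∀ x ∈ I, HasDerivAt X (1 / (ε₅ * x + ε₆) ^ 2) x ∧ 0 < 1 / (ε₅ * x + ε₆) ^ 2)
    ∧ ∀ ttld : ℝ, ∀ xtld ∈ X '' I,
        ftld xtld * pt2 (pt2 utld) ttld xtld
          = deriv (fun y => (utld ttld y) ^ n * px2 utld ttld y) xtld + htld xtld * (utld ttld xtld) ^ m := by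
  have h2n2 : 2*n+2 ≠ 0 := fun hc => hn1 (by linarith)
  have hn1' : n+1 ≠ 0 := fun hc => hn1 (by linarith)
  have hle1 : ((⊤ : ℕ∞) : WithTop ℕ∞) ≠ 0 := by simp
  set a : ℝ := 1/(2*n+2) with ha_def
  have haa : a * n + a = 1/2 := by rw [ha_def]; field_simp
  have hppos : ∀ x ∈ I, (0:ℝ) < 1/(ε₅*x+ε₆)^2 := fun x hx =>
    one_div_pos.mpr ((sq_nonneg _).lt_of_ne (Ne.symm (pow_ne_zero 2 (hden x hx))))
  have hXd : ∀ x ∈ I, HasDerivAt X (1 / (ε₅ * x + ε₆) ^ 2) x := by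
    intro x hx
    have hm := moeb_hasDerivAt ε₃ ε₄ ε₅ ε₆ x hdet (hden x hx)
    have hXfun : X = fun y => (ε₃*y+ε₄)/(ε₅*y+ε₆) := funext hXdef
    rw [hXfun]; exact hm
  refine ⟨fun x hx => ⟨hXd x hx, hppos x hx⟩, ?_⟩
  rintro ttld xtld ⟨x₀, hx₀, rfl⟩
  set t₀ : ℝ := (ttld - ε₂)/ε₁ with ht₀
  have htt : ε₁ * t₀ + ε₂ = ttld := by rw [ht₀]; field_simp; ring
  -- slice smoothness
  have hw : ContDiffOn ℝ (⊤:ℕ∞) (fun y => u t₀ y) I := by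
    have he : (fun y => u t₀ y) = (fun p : ℝ × ℝ => u p.1 p.2) ∘ (fun y => (t₀, y)) := rfl
    rw [he]
    exact hu.comp (contDiff_const.prodMk contDiff_id).contDiffOn (fun y hy => ⟨mem_univ _, hy⟩)
  set w1 : ℝ → ℝ := deriv (fun y => u t₀ y) with hw1def
  set w2 : ℝ → ℝ := deriv w1 with hw2def
  have hw1s : ContDiffOn ℝ (⊤:ℕ∞) w1 I := ((contDiffOn_infty_iff_deriv_of_isOpen hI).mp hw).2
  have hwd : ∀ x ∈ I, HasDerivAt (fun y => u t₀ y) (w1 x) x := fun x hx =>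
    ((hw.differentiableOn hle1).differentiableAt (hI.mem_nhds hx)).hasDerivAt
  have hw2d : ∀ x ∈ I, HasDerivAt w1 (w2 x) x := fun x hx =>
    ((hw1s.differentiableOn hle1).differentiableAt (hI.mem_nhds hx)).hasDerivAt
  have hφ : ContDiff ℝ (⊤:ℕ∞) (fun t => u t x₀) := by
    rw [← contDiffOn_univ]
    have he : (fun t => u t x₀) = (fun p : ℝ × ℝ => u p.1 p.2) ∘ (fun t => (t, x₀)) := rfl
    rw [he]
    exact hu.comp (contDiff_id.prodMk contDiff_const).contDiffOn (fun t _ => ⟨mem_univ _, hx₀⟩)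
  set φ1 : ℝ → ℝ := deriv (fun t => u t x₀) with hφ1def
  set φ2 : ℝ → ℝ := deriv φ1 with hφ2def
  have hφ1s : ContDiff ℝ (⊤:ℕ∞) φ1 := (contDiff_infty_iff_deriv.mp hφ).2
  have hφd : ∀ t : ℝ, HasDerivAt (fun s => u s x₀) (φ1 t) t := fun t =>
    ((hφ.differentiable hle1) t).hasDerivAt
  have hφ1d : ∀ t : ℝ, HasDerivAt φ1 (φ2 t) t := fun t =>
    ((hφ1s.differentiable hle1) t).hasDerivAt
  -- time direction
  have hcurve : ∀ s : ℝ, utld s (X x₀) = ε₇ * (1/(ε₅*x₀+ε₆)^2)^a * u ((s-ε₂)/ε₁) x₀ := by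
    intro s
    have h1 := hutlddef ((s-ε₂)/ε₁) x₀ hx₀
    rwa [show ε₁*((s-ε₂)/ε₁)+ε₂ = s by field_simp; ring] at h1
  have hpt : ∀ s : ℝ, pt2 utld s (X x₀)
      = ε₇ * (1/(ε₅*x₀+ε₆)^2)^a / ε₁ * φ1 ((s-ε₂)/ε₁) := by
    intro s
    have h1 : (fun r => utld r (X x₀))
        = fun r => ε₇ * (1/(ε₅*x₀+ε₆)^2)^a * u ((r-ε₂)/ε₁) x₀ := funext hcurve
    have h3 : HasDerivAt (fun r : ℝ => (r-ε₂)/ε₁) (1/ε₁) s :=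
      ((hasDerivAt_id s).sub_const ε₂).div_const ε₁
    have h4 : HasDerivAt (fun r : ℝ => u ((r-ε₂)/ε₁) x₀) (φ1 ((s-ε₂)/ε₁) * (1/ε₁)) s :=
      ((hφd ((s-ε₂)/ε₁)).comp s h3 :)
    have h5 := h4.const_mul (ε₇ * (1/(ε₅*x₀+ε₆)^2)^a)
    show deriv (fun r => utld r (X x₀)) s = _
    rw [h1, h5.deriv]
    ring
  have hptt : pt2 (pt2 utld) ttld (X x₀)
      = ε₇ * (1/(ε₅*x₀+ε₆)^2)^a / ε₁^2 * φ2 t₀ := by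
    have h1 : (fun s => pt2 utld s (X x₀))
        = fun s => ε₇ * (1/(ε₅*x₀+ε₆)^2)^a / ε₁ * φ1 ((s-ε₂)/ε₁) := funext hpt
    have h3 : HasDerivAt (fun s : ℝ => (s-ε₂)/ε₁) (1/ε₁) ttld :=
      ((hasDerivAt_id ttld).sub_const ε₂).div_const ε₁
    have h4 : HasDerivAt (fun s : ℝ => φ1 ((s-ε₂)/ε₁)) (φ2 ((ttld-ε₂)/ε₁) * (1/ε₁)) ttld :=
      ((hφ1d ((ttld-ε₂)/ε₁)).comp ttld h3 :)
    have h5 := h4.const_mul (ε₇ * (1/(ε₅*x₀+ε₆)^2)^a / ε₁)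
    show deriv (fun s => pt2 utld s (X x₀)) ttld = _
    rw [h1, h5.deriv, ← ht₀]
    ring
  have hpttu : pt2 (pt2 u) t₀ x₀ = φ2 t₀ := rfl
  -- inverse map
  set Y : ℝ → ℝ := fun y => (ε₆*y + -ε₄)/(-ε₅*y + ε₃) with hYdef
  have hdet' : ε₆*ε₃ - (-ε₄)*(-ε₅) = 1 := by linear_combination hdet
  have hq : ∀ x ∈ I, -ε₅ * X x + ε₃ = 1/(ε₅*x+ε₆) := by
    intro x hx
    rw [hXdef x]
    have hd := hden x hx
    field_simp
    linear_combination hdet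
  have hnum : ∀ x ∈ I, ε₆ * X x + -ε₄ = x/(ε₅*x+ε₆) := by
    intro x hx
    rw [hXdef x]
    have hd := hden x hx
    rw [mul_div_assoc', div_add' _ _ _ hd, div_left_inj' hd]
    linear_combination x * hdet
  have hYX : ∀ x ∈ I, Y (X x) = x := by
    intro x hx
    have hd := hden x hx
    show (ε₆*(X x) + -ε₄)/(-ε₅*(X x) + ε₃) = x
    rw [hnum x hx, hq x hx]
    rw [div_div_eq_mul_div, div_one]; exact div_mul_cancel₀ _ hd
  have hpY : ∀ y : ℝ, -ε₅*y+ε₃ ≠ 0 → ε₅ * Y y + ε₆ = 1/(-ε₅*y+ε₃) := by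
    intro y hy
    show ε₅ * ((ε₆*y + -ε₄)/(-ε₅*y + ε₃)) + ε₆ = _
    rw [eq_div_iff hy]
    have hc : (ε₆*y + -ε₄)/(-ε₅*y+ε₃) * (-ε₅*y+ε₃) = ε₆*y + -ε₄ := div_mul_cancel₀ _ hy
    linear_combination ε₅ * hc + hdet
  have hnum2 : ∀ y : ℝ, -ε₅*y+ε₃ ≠ 0 → ε₃ * Y y + ε₄ = y/(-ε₅*y+ε₃) := by
    intro y hy
    show ε₃ * ((ε₆*y + -ε₄)/(-ε₅*y + ε₃)) + ε₄ = _
    rw [eq_div_iff hy]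
    have hc : (ε₆*y + -ε₄)/(-ε₅*y+ε₃) * (-ε₅*y+ε₃) = ε₆*y + -ε₄ := div_mul_cancel₀ _ hy
    linear_combination ε₃ * hc + y * hdet
  have hXY : ∀ y : ℝ, -ε₅*y+ε₃ ≠ 0 → X (Y y) = y := by
    intro y hy
    rw [hXdef (Y y), hnum2 y hy, hpY y hy, div_div_eq_mul_div, div_one]
    exact div_mul_cancel₀ _ hy
  have hYd : ∀ y : ℝ, -ε₅*y+ε₃ ≠ 0 → HasDerivAt Y (1/(-ε₅*y+ε₃)^2) y := by
    intro y hy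
    rw [hYdef]
    exact moeb_hasDerivAt ε₆ (-ε₄) (-ε₅) ε₃ y hdet' hy
  -- the open set V
  set V : Set ℝ := {y | -ε₅*y+ε₃ ≠ 0 ∧ Y y ∈ I} with hVdef
  have hVopen : IsOpen V := by
    rw [isOpen_iff_mem_nhds]
    rintro y ⟨hy1, hy2⟩
    have hc1 : ContinuousAt (fun y : ℝ => -ε₅*y+ε₃) y := by fun_prop
    have hc2 : ContinuousAt Y y := by
      rw [hYdef]
      exact ContinuousAt.div (by fun_prop) (by fun_prop) hy1
    have e1 : ∀ᶠ z in nhds y, -ε₅*z+ε₃ ≠ 0 := hc1.eventually_ne hy1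
    have e2 : ∀ᶠ z in nhds y, Y z ∈ I := hc2.preimage_mem_nhds (hI.mem_nhds hy2)
    filter_upwards [e1, e2] with z h1 h2 using ⟨h1, h2⟩
  have hq0 : -ε₅*(X x₀)+ε₃ ≠ 0 := by
    rw [hq x₀ hx₀]
    exact one_div_ne_zero (hden x₀ hx₀)
  have hxV : X x₀ ∈ V := ⟨hq0, by rw [hYX x₀ hx₀]; exact hx₀⟩
  -- space direction functions
  set F : ℝ → ℝ := fun x => ε₇ * ((1/(ε₅*x+ε₆)^2)^a * u t₀ x) with hFdef
  set Fd : ℝ → ℝ := fun x => ε₇ * ((-2*ε₅/(ε₅*x+ε₆)^3 * a * (1/(ε₅*x+ε₆)^2)^(a-1)) * u t₀ x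
      + (1/(ε₅*x+ε₆)^2)^a * w1 x) with hFddef
  have hFu : ∀ y ∈ V, utld ttld y = F (Y y) := by
    rintro y ⟨hy1, hy2⟩
    have h1 := hutlddef t₀ (Y y) hy2
    rw [htt, hXY y hy1] at h1
    rw [h1, hFdef]
    ring
  have hpd : ∀ x : ℝ, HasDerivAt (fun x' => ε₅*x'+ε₆) ε₅ x := by
    intro x
    simpa using ((hasDerivAt_id x).const_mul ε₅).add_const ε₆
  have hsd' : ∀ x ∈ I, HasDerivAt (fun x' => 1/(ε₅*x'+ε₆)^2) (-2*ε₅/(ε₅*x+ε₆)^3) x := by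
    intro x hx
    have hd := hden x hx
    have h1 := (hasDerivAt_const x (1:ℝ)).div ((hpd x).pow 2) (pow_ne_zero 2 hd)
    apply HasDerivAt.congr_deriv h1
    simp only [Pi.pow_apply]
    field_simp
    ring
  have hSAd : ∀ x ∈ I, HasDerivAt (fun x' => (1/(ε₅*x'+ε₆)^2)^a)
      (-2*ε₅/(ε₅*x+ε₆)^3 * a * (1/(ε₅*x+ε₆)^2)^(a-1)) x := fun x hx =>
    (hsd' x hx).rpow_const (Or.inl (hppos x hx).ne')
  have hSA1d : ∀ x ∈ I, HasDerivAt (fun x' => (1/(ε₅*x'+ε₆)^2)^(a-1))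
      (-2*ε₅/(ε₅*x+ε₆)^3 * (a-1) * (1/(ε₅*x+ε₆)^2)^(a-1-1)) x := fun x hx =>
    (hsd' x hx).rpow_const (Or.inl (hppos x hx).ne')
  have hFd : ∀ x ∈ I, HasDerivAt F (Fd x) x := by
    intro x hx
    exact ((hSAd x hx).mul (hwd x hx)).const_mul ε₇
  -- px2 of utld on V
  have hpx : ∀ y ∈ V, px2 utld ttld y = Fd (Y y) * (ε₅*(Y y)+ε₆)^2 := by
    rintro y ⟨hy1, hy2⟩
    have hEq : (fun y' => utld ttld y') =ᶠ[nhds y] fun y' => F (Y y') := by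
      filter_upwards [hVopen.mem_nhds ⟨hy1, hy2⟩] with z hz using hFu z hz
    have hcomp : HasDerivAt (fun y' => F (Y y')) (Fd (Y y) * (1/(-ε₅*y+ε₃)^2)) y :=
      (hFd (Y y) hy2).comp y (hYd y hy1)
    show deriv (fun y' => utld ttld y') y = _
    rw [hEq.deriv_eq, hcomp.deriv, hpY y hy1]
    rw [div_pow, one_pow]
  -- derivative of F^n * (Fd * p^2) at x₀
  have hg1d := ((hasDerivAt_const x₀ (-2*ε₅)).div ((hpd x₀).pow 3)
    (pow_ne_zero 3 (hden x₀ hx₀))).mul_const a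
  have hAd := hg1d.mul (hSA1d x₀ hx₀)
  have hFdAt' : HasDerivAt Fd _ x₀ :=
    ((hAd.mul (hwd x₀ hx₀)).add ((hSAd x₀ hx₀).mul (hw2d x₀ hx₀))).const_mul ε₇
  have hFpos : 0 < F x₀ := by
    rw [hFdef]
    exact mul_pos hε₇ (mul_pos (rpow_pos_of_pos (hppos x₀ hx₀) a) (hupos t₀ x₀ hx₀))
  have hFn : HasDerivAt (fun x => F x ^ n) (Fd x₀ * n * F x₀ ^ (n-1)) x₀ :=
    (hFd x₀ hx₀).rpow_const (Or.inl hFpos.ne')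
  have hH := hFn.mul (hFdAt'.mul ((hpd x₀).pow 2))
  have hYd0 : HasDerivAt Y ((ε₅*x₀+ε₆)^2) (X x₀) := by
    have h2 := hYd (X x₀) hq0
    rw [hq x₀ hx₀, div_pow, one_pow, one_div_one_div] at h2
    exact h2
  have hH2 := hH
  rw [← hYX x₀ hx₀] at hH2
  have hcomp2 := hH2.comp (X x₀) hYd0
  have hGeq : (fun y => utld ttld y ^ n * px2 utld ttld y)
      =ᶠ[nhds (X x₀)] (fun y => F (Y y) ^ n * (Fd (Y y) * (ε₅*(Y y)+ε₆)^2)) := by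
    filter_upwards [hVopen.mem_nhds hxV] with z hz
    rw [hFu z hz, hpx z hz]
  have hderivG := hGeq.deriv_eq.trans hcomp2.deriv
  rw [hYX x₀ hx₀] at hderivG
  -- the solution equation at (t₀, x₀)
  have hW0 : (0:ℝ) < u t₀ x₀ := hupos t₀ x₀ hx₀
  have hEd : HasDerivAt (fun y => u t₀ y ^ n * px2 u t₀ y)
      ((w1 x₀ * n * u t₀ x₀ ^ (n-1)) * w1 x₀ + u t₀ x₀ ^ n * w2 x₀) x₀ := by
    have h1 : (fun y => u t₀ y ^ n * px2 u t₀ y) = fun y => u t₀ y ^ n * w1 y := rfl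
    rw [h1]
    exact ((hwd x₀ hx₀).rpow_const (Or.inl hW0.ne')).mul (hw2d x₀ hx₀)
  have eW : u t₀ x₀ ^ (n-1) = u t₀ x₀ ^ n / u t₀ x₀ := by
    rw [rpow_sub hW0, rpow_one]
  have hfu2 : f x₀ * φ2 t₀ = (u t₀ x₀)^n/(u t₀ x₀) * w1 x₀ * (n * w1 x₀)
      + (u t₀ x₀)^n * w2 x₀ + h x₀ * (u t₀ x₀)^m := by
    have hs := hsol t₀ x₀ hx₀
    rw [hpttu, hEd.deriv, eW] at hs
    linear_combination hs
  -- rpow rewrite lemmas at x₀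
  have hS0 : (0:ℝ) < 1/(ε₅*x₀+ε₆)^2 := hppos x₀ hx₀
  have hP0 : (ε₅*x₀+ε₆) ≠ 0 := hden x₀ hx₀
  have er1 : (1/(ε₅*x₀+ε₆)^2)^(a-1) = (1/(ε₅*x₀+ε₆)^2)^a * (ε₅*x₀+ε₆)^2 := by
    rw [rpow_sub hS0, rpow_one]
    field_simp
  have er2 : (1/(ε₅*x₀+ε₆)^2)^(a-1-1) = (1/(ε₅*x₀+ε₆)^2)^a * (ε₅*x₀+ε₆)^4 := by
    rw [show a-1-1 = a - (2:ℕ) by push_cast; ring, rpow_sub hS0, rpow_natCast]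
    rw [div_pow, one_pow, ← pow_mul, div_div_eq_mul_div, div_one]
  have ean : a * n = 1/2 - a := by linarith
  have er3 : (ε₇*((1/(ε₅*x₀+ε₆)^2)^a * u t₀ x₀)) ^ n
      = ε₇^n * ((1/(ε₅*x₀+ε₆)^2)^((1:ℝ)/2) / (1/(ε₅*x₀+ε₆)^2)^a * (u t₀ x₀)^n) := by
    rw [mul_rpow hε₇.le (by positivity), mul_rpow (by positivity) hW0.le,
      ← rpow_mul hS0.le, ean, rpow_sub hS0]
  have er4 : (ε₇*((1/(ε₅*x₀+ε₆)^2)^a * u t₀ x₀)) ^ (n-1)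
      = ε₇^n/ε₇ * ((1/(ε₅*x₀+ε₆)^2)^((1:ℝ)/2) / ((1/(ε₅*x₀+ε₆)^2)^a * (1/(ε₅*x₀+ε₆)^2)^a)
          * ((u t₀ x₀)^n / u t₀ x₀)) := by
    rw [mul_rpow hε₇.le (by positivity), mul_rpow (by positivity) hW0.le,
      ← rpow_mul hS0.le, show a*(n-1) = 1/2 - (a+a) by linarith, rpow_sub hS0,
      rpow_add hS0, rpow_sub hε₇, rpow_one, rpow_sub hW0, rpow_one]
  have er5 : (ε₇ * (1/(ε₅*x₀+ε₆)^2)^a * u t₀ x₀) ^ m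
      = ε₇^m * (1/(ε₅*x₀+ε₆)^2)^(a*m) * (u t₀ x₀)^m := by
    rw [mul_rpow (by positivity) hW0.le, mul_rpow hε₇.le (by positivity),
      ← rpow_mul hS0.le]
  have er6 : (1/(ε₅*x₀+ε₆)^2)^(-(3*n+4)/(2*n+2))
      = (1/(ε₅*x₀+ε₆)^2)^((1:ℝ)/2) * (ε₅*x₀+ε₆)^4 / (1/(ε₅*x₀+ε₆)^2)^a := by
    rw [show -(3*n+4)/(2*n+2) = (1:ℝ)/2 - (2:ℕ) - a by
      rw [ha_def]; push_cast; field_simp; ring_nf]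
    rw [rpow_sub hS0, rpow_sub hS0, rpow_natCast, div_pow, one_pow]
    rw [← pow_mul, div_div_eq_mul_div, div_one]
  have er7 : (1/(ε₅*x₀+ε₆)^2)^(-(m+3*n+3)/(2*n+2))
      = (1/(ε₅*x₀+ε₆)^2)^((1:ℝ)/2) * (ε₅*x₀+ε₆)^4 / (1/(ε₅*x₀+ε₆)^2)^(a*m) := by
    rw [show -(m+3*n+3)/(2*n+2) = (1:ℝ)/2 - (2:ℕ) - a*m by
      rw [ha_def]; push_cast; field_simp; ring_nf]
    rw [rpow_sub hS0, rpow_sub hS0, rpow_natCast, div_pow, one_pow]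
    rw [← pow_mul, div_div_eq_mul_div, div_one]
  have er8 : ε₇^(n+1-m) = ε₇^n*ε₇/ε₇^m := by
    rw [rpow_sub hε₇, rpow_add hε₇, rpow_one]
  -- final assembly
  rw [hftlddef x₀ hx₀, hhtlddef x₀ hx₀, hptt, hderivG, hcurve ttld, ← ht₀]
  simp only [hFdef, hFddef, Pi.pow_apply, Pi.mul_apply, Pi.div_apply]
  rw [er3, er4, er5, er6, er7, er8, er1, er2]
  beta_reduce
  generalize hPP : ε₅*x₀+ε₆ = PP at hS0 hP0 ⊢
  linear_combination key_algebra a n ε₅ ε₁ PP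
    ((1/PP^2)^((1:ℝ)/2)) ((1/PP^2)^a) ((1/PP^2)^(a*m))
    ε₇ (ε₇^n) (ε₇^m) (u t₀ x₀) ((u t₀ x₀)^n) ((u t₀ x₀)^m) (w1 x₀) (w2 x₀)
    (f x₀) (φ2 t₀) (h x₀)
    hP0 hW0.ne' hε₇.ne' (rpow_pos_of_pos hS0 a).ne' (rpow_pos_of_pos hS0 (a*m)).ne'
    (rpow_pos_of_pos hε₇ m).ne' hε₁ haa hfu2

end
end

section
/- Let m ∈ ℝ and let ε₁, ε₂, ε₃, ε₄, ε₆ ∈ ℝ and ε₅ > 0 with ε₁ ≠ 0 and ε₃ ≠ 0. Let I ⊆ ℝ be an open interval, f : I → (0,∞) and h : I → ℝ smooth, and let u : ℝ × I → (0,∞) be a smooth solution of f(x)u_tt = ∂_x(u^{−1}u_x) + h(x)uᵐ. Define ũ on the transformed domain by ũ(ε₁t + ε₂, ε₃x + ε₄) = ε₅·e^{ε₆x}·u(t,x), and define f̃(ε₃x + ε₄) = ε₁²ε₃^{−2}ε₅^{−1}e^{−ε₆x}·f(x) and h̃(ε₃x + ε₄) = ε₃^{−2}ε₅^{−m}e^{−mε₆x}·h(x).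 Then ũ satisfies f̃(x̃)·ũ_t̃t̃ = ∂_x̃(ũ^{−1}ũ_x̃) + h̃(x̃)·ũᵐ on the transformed domain. -/
open Real Set

noncomputable section

/-- equivalence group, case `n = −1`. The point transformation
`t̃ = ε₁t + ε₂`, `x̃ = ε₃x + ε₄`, `ũ = ε₅e^{ε₆x}u` maps positive smooth solutions of
`f u_tt = (u⁻¹u_x)_x + h uᵐ` to solutions of the equation with transformed arbitrary
elements `f̃ = ε₁²ε₃⁻²ε₅⁻¹e^{−ε₆x}f`, `h̃ = ε₃⁻²ε₅⁻ᵐe^{−mε₆x}h`. -/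
theorem equivalence_group_n_eq_neg_one
    (m : ℝ) (ε₁ ε₂ ε₃ ε₄ ε₅ ε₆ : ℝ) (hε₁ : ε₁ ≠ 0) (hε₃ : ε₃ ≠ 0) (hε₅ : 0 < ε₅)
    (I : Set ℝ) (hI : IsOpen I) (hIc : I.OrdConnected)
    (f h : ℝ → ℝ) (hf : ContDiffOn ℝ (⊤ : ℕ∞) f I) (hh : ContDiffOn ℝ (⊤ : ℕ∞) h I)
    (hfpos : ∀ x ∈ I, 0 < f x)
    (u : ℝ → ℝ → ℝ)
    (hu : ContDiffOn ℝ (⊤ : ℕ∞) (fun p : ℝ × ℝ => u p.1 p.2) (univ ×ˢ I))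
    (hupos : ∀ t : ℝ, ∀ x ∈ I, 0 < u t x)
    (hsol : ∀ t : ℝ, ∀ x ∈ I,
      f x * pt2 (pt2 u) t x
        = deriv (fun y => (u t y) ^ (-1 : ℝ) * px2 u t y) x + h x * (u t x) ^ m)
    (utld : ℝ → ℝ → ℝ) (ftld htld : ℝ → ℝ)
    (hutlddef : ∀ t : ℝ, ∀ x ∈ I,
      utld (ε₁ * t + ε₂) (ε₃ * x + ε₄) = ε₅ * Real.exp (ε₆ * x) * u t x)
    (hftlddef : ∀ x ∈ I,
      ftld (ε₃ * x + ε₄) = ε₁ ^ 2 * (ε₃ ^ 2)⁻¹ * ε₅⁻¹ * Real.exp (-ε₆ * x) * f x)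
    (hhtlddef : ∀ x ∈ I,
      htld (ε₃ * x + ε₄) = (ε₃ ^ 2)⁻¹ * ε₅ ^ (-m) * Real.exp (-m * ε₆ * x) * h x) :
    ∀ ttld : ℝ, ∀ xtld ∈ (fun x => ε₃ * x + ε₄) '' I,
      ftld xtld * pt2 (pt2 utld) ttld xtld
        = deriv (fun y => (utld ttld y) ^ (-1 : ℝ) * px2 utld ttld y) xtld
          + htld xtld * (utld ttld xtld) ^ m := by
  intro ttld xtld hxt
  obtain ⟨x, hx, rfl⟩ := hxt
  set t : ℝ := (ttld - ε₂) / ε₁ with ht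
  have httld : ttld = ε₁ * t + ε₂ := by rw [ht]; field_simp; ring
  -- slice smoothness
  have hslice_t : ∀ x' ∈ I, ContDiff ℝ (⊤ : ℕ∞) (fun s : ℝ => u s x') := by
    intro x' hx'
    have hmap : ContDiff ℝ (⊤ : ℕ∞) (fun s : ℝ => (s, x')) :=
      contDiff_id.prodMk contDiff_const
    have := hu.comp (hmap.contDiffOn : ContDiffOn ℝ (⊤ : ℕ∞) _ univ)
      (fun s _ => ⟨mem_univ _, hx'⟩)
    exact contDiffOn_univ.mp this
  have hslice_x : ∀ t' : ℝ, ContDiffOn ℝ (⊤ : ℕ∞) (fun y => u t' y) I := by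
    intro t'
    exact hu.comp (contDiff_const.prodMk contDiff_id).contDiffOn
      (fun y hy => ⟨mem_univ _, hy⟩)
  have hle1 : (1 : WithTop ℕ∞) ≤ ((⊤ : ℕ∞) : WithTop ℕ∞) := by exact_mod_cast le_top
  set c : ℝ := ε₅ * Real.exp (ε₆ * x) with hc
  have hcpos : 0 < c := mul_pos hε₅ (exp_pos _)
  -- time derivatives
  set g : ℝ → ℝ := fun s => u s x with hg
  have hgc : ContDiff ℝ (⊤ : ℕ∞) g := hslice_t x hx
  have hgc' : ContDiff ℝ (⊤ : ℕ∞) (deriv g) := (contDiff_infty_iff_deriv.mp hgc).2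
  have hinner : ∀ s : ℝ, HasDerivAt (fun s' : ℝ => (s' - ε₂) / ε₁) ε₁⁻¹ s := by
    intro s
    simpa [div_eq_mul_inv, one_mul] using ((hasDerivAt_id s).sub_const ε₂).div_const ε₁
  have hutld_t : ∀ s : ℝ, utld s (ε₃ * x + ε₄) = c * g ((s - ε₂) / ε₁) := by
    intro s
    have h0 := hutlddef ((s - ε₂) / ε₁) x hx
    rw [show ε₁ * ((s - ε₂) / ε₁) + ε₂ = s by field_simp; ring] at h0
    exact h0
  have hA1 : ∀ s : ℝ, pt2 utld s (ε₃ * x + ε₄) = c * ε₁⁻¹ * deriv g ((s - ε₂) / ε₁) := by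
    intro s
    have heq : (fun s' : ℝ => utld s' (ε₃ * x + ε₄)) = fun s' => c * g ((s' - ε₂) / ε₁) :=
      funext hutld_t
    have hD : HasDerivAt (fun s' : ℝ => c * g ((s' - ε₂) / ε₁))
        (c * (deriv g ((s - ε₂) / ε₁) * ε₁⁻¹)) s := by
      exact (((hgc.differentiable (by simp) ((s - ε₂) / ε₁)).hasDerivAt.comp s
        (hinner s))).const_mul c
    show deriv (fun s' : ℝ => utld s' (ε₃ * x + ε₄)) s = _
    rw [heq, hD.deriv]; ring
  have hA2 : pt2 (pt2 utld) ttld (ε₃ * x + ε₄) = c * ε₁⁻¹ * ε₁⁻¹ * pt2 (pt2 u) t x := by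
    have heq : (fun s : ℝ => pt2 utld s (ε₃ * x + ε₄))
        = fun s => c * ε₁⁻¹ * deriv g ((s - ε₂) / ε₁) := funext hA1
    have hD : HasDerivAt (fun s : ℝ => c * ε₁⁻¹ * deriv g ((s - ε₂) / ε₁))
        (c * ε₁⁻¹ * (deriv (deriv g) ((ttld - ε₂) / ε₁) * ε₁⁻¹)) ttld :=
      (((hgc'.differentiable (by simp) ((ttld - ε₂) / ε₁)).hasDerivAt.comp ttld
        (hinner ttld))).const_mul (c * ε₁⁻¹)
    have h1 : pt2 (pt2 utld) ttld (ε₃ * x + ε₄)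
        = deriv (fun s : ℝ => pt2 utld s (ε₃ * x + ε₄)) ttld := rfl
    have h2 : pt2 (pt2 u) t x = deriv (deriv g) t := by
      simp only [pt2, hg]
    rw [h1, heq, hD.deriv, h2, ← ht]; ring
  -- spatial part
  set φ : ℝ → ℝ := fun y => (y - ε₄) / ε₃ with hφ
  have hφd : ∀ y : ℝ, HasDerivAt φ ε₃⁻¹ y := by
    intro y
    simpa [hφ, div_eq_mul_inv, one_mul] using ((hasDerivAt_id y).sub_const ε₄).div_const ε₃
  have hφx : φ (ε₃ * x + ε₄) = x := by simp only [hφ]; field_simp; ring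
  set J : Set ℝ := (fun x => ε₃ * x + ε₄) '' I with hJ
  have hJeq : J = φ ⁻¹' I := by
    ext y
    constructor
    · rintro ⟨z, hz, rfl⟩
      have : φ (ε₃ * z + ε₄) = z := by simp only [hφ]; field_simp; ring
      simpa [this] using hz
    · intro hy
      exact ⟨φ y, hy, by simp only [hφ]; field_simp; ring⟩
  have hJopen : IsOpen J := by
    rw [hJeq, hφ]
    exact hI.preimage ((continuous_id.sub continuous_const).div_const ε₃)
  have hxJ : (ε₃ * x + ε₄) ∈ J := ⟨x, hx, rfl⟩
  set w : ℝ → ℝ := fun y => u t y with hw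
  have hwc : ContDiffOn ℝ (⊤ : ℕ∞) w I := hslice_x t
  have hwdiff : ∀ z ∈ I, DifferentiableAt ℝ w z := fun z hz =>
    (hwc.differentiableOn (by simp)).differentiableAt (hI.mem_nhds hz)
  have hwc' : ContDiffOn ℝ (⊤ : ℕ∞) (deriv w) I := by
    exact hwc.deriv_of_isOpen hI (by exact_mod_cast le_top)
  have hw'diff : ∀ z ∈ I, DifferentiableAt ℝ (deriv w) z := fun z hz =>
    (hwc'.differentiableOn (by simp)).differentiableAt (hI.mem_nhds hz)
  have hutld_x : ∀ y ∈ J, utld ttld y = ε₅ * Real.exp (ε₆ * φ y) * w (φ y) := by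
    intro y hy
    rw [hJeq] at hy
    have hyeq : y = ε₃ * φ y + ε₄ := by simp only [hφ]; field_simp; ring
    rw [httld]
    conv_lhs => rw [hyeq]
    exact hutlddef t (φ y) hy
  have hB1 : ∀ y ∈ J, px2 utld ttld y
      = ε₅ * Real.exp (ε₆ * φ y) * (ε₆ * ε₃⁻¹ * w (φ y) + ε₃⁻¹ * deriv w (φ y)) := by
    intro y hy
    have hyI : φ y ∈ I := by rw [hJeq] at hy; exact hy
    have hEq : (fun y' => utld ttld y') =ᶠ[nhds y]
        (fun y' => ε₅ * Real.exp (ε₆ * φ y') * w (φ y')) :=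
      Filter.eventuallyEq_of_mem (hJopen.mem_nhds hy) hutld_x
    have hexp : HasDerivAt (fun y' => Real.exp (ε₆ * φ y'))
        (Real.exp (ε₆ * φ y) * (ε₆ * ε₃⁻¹)) y :=
      ((hφd y).const_mul ε₆).exp
    have hwcomp : HasDerivAt (fun y' => w (φ y')) (deriv w (φ y) * ε₃⁻¹) y :=
      (hwdiff (φ y) hyI).hasDerivAt.comp y (hφd y)
    have hD : HasDerivAt (fun y' => ε₅ * Real.exp (ε₆ * φ y') * w (φ y'))
        (ε₅ * (Real.exp (ε₆ * φ y) * (ε₆ * ε₃⁻¹)) * w (φ y)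
          + ε₅ * Real.exp (ε₆ * φ y) * (deriv w (φ y) * ε₃⁻¹)) y :=
      (hexp.const_mul ε₅).mul hwcomp
    show deriv (fun y' => utld ttld y') y = _
    rw [Filter.EventuallyEq.deriv_eq hEq, hD.deriv]; ring
  have hB2 : ∀ y ∈ J, (utld ttld y) ^ (-1 : ℝ) * px2 utld ttld y
      = ε₆ * ε₃⁻¹ + ε₃⁻¹ * ((w (φ y)) ^ (-1 : ℝ) * deriv w (φ y)) := by
    intro y hy
    have hyI : φ y ∈ I := by rw [hJeq] at hy; exact hy
    have hwpos : 0 < w (φ y) := hupos t (φ y) hyI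
    rw [hutld_x y hy, hB1 y hy, Real.rpow_neg_one, Real.rpow_neg_one]
    have h1 : ε₅ * Real.exp (ε₆ * φ y) * w (φ y) ≠ 0 :=
      (mul_pos (mul_pos hε₅ (exp_pos _)) hwpos).ne'
    field_simp
  -- the inner spatial nonlinear term
  set G : ℝ → ℝ := fun z => (w z) ^ (-1 : ℝ) * deriv w z with hG
  have hGdiff : DifferentiableAt ℝ G x := by
    have hEq : G =ᶠ[nhds x] (fun z => (w z)⁻¹ * deriv w z) := by
      filter_upwards [hI.mem_nhds hx] with z hz
      simp only [hG, Real.rpow_neg_one]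
    have hD : DifferentiableAt ℝ (fun z => (w z)⁻¹ * deriv w z) x :=
      ((hwdiff x hx).inv (hupos t x hx).ne').mul (hw'diff x hx)
    exact hD.congr_of_eventuallyEq hEq
  have hB3 : deriv (fun y => (utld ttld y) ^ (-1 : ℝ) * px2 utld ttld y) (ε₃ * x + ε₄)
      = ε₃⁻¹ * ε₃⁻¹ * deriv G x := by
    have hEq : (fun y => (utld ttld y) ^ (-1 : ℝ) * px2 utld ttld y) =ᶠ[nhds (ε₃ * x + ε₄)]
        (fun y => ε₆ * ε₃⁻¹ + ε₃⁻¹ * G (φ y)) := by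
      filter_upwards [hJopen.mem_nhds hxJ] with y hy
      rw [hB2 y hy]
    have hG0 : HasDerivAt G (deriv G x) (φ (ε₃ * x + ε₄)) := by
      rw [hφx]; exact hGdiff.hasDerivAt
    have hcomp : HasDerivAt (fun y => G (φ y)) (deriv G x * ε₃⁻¹) (ε₃ * x + ε₄) :=
      hG0.comp _ (hφd _)
    have hD : HasDerivAt (fun y => ε₆ * ε₃⁻¹ + ε₃⁻¹ * G (φ y))
        (ε₃⁻¹ * (deriv G x * ε₃⁻¹)) (ε₃ * x + ε₄) :=
      (hcomp.const_mul ε₃⁻¹).const_add (ε₆ * ε₃⁻¹)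
    rw [Filter.EventuallyEq.deriv_eq hEq, hD.deriv]; ring
  -- final assembly
  have hxpos : 0 < u t x := hupos t x hx
  have hGex : deriv (fun y => (u t y) ^ (-1 : ℝ) * px2 u t y) x = deriv G x := rfl
  have hmain := hsol t x hx
  rw [hGex] at hmain
  have hwx : w x = u t x := rfl
  have hutldval : utld ttld (ε₃ * x + ε₄) = ε₅ * Real.exp (ε₆ * x) * u t x := by
    rw [hutld_x _ hxJ, hφx, hwx]
  rw [hA2, hB3, hftlddef x hx, hhtlddef x hx, hutldval, hc]
  have hmul : (ε₅ * Real.exp (ε₆ * x) * u t x) ^ m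
      = ε₅ ^ m * Real.exp (ε₆ * x * m) * (u t x) ^ m := by
    rw [Real.mul_rpow (by positivity) hxpos.le,
      Real.mul_rpow hε₅.le (Real.exp_pos _).le, ← Real.exp_mul]
  rw [hmul]
  have hL : ε₁ ^ 2 * (ε₃ ^ 2)⁻¹ * ε₅⁻¹ * Real.exp (-ε₆ * x) * f x
      * (ε₅ * Real.exp (ε₆ * x) * ε₁⁻¹ * ε₁⁻¹ * pt2 (pt2 u) t x)
      = (ε₃ ^ 2)⁻¹ * (f x * pt2 (pt2 u) t x) := by
    have he : Real.exp (-ε₆ * x) * Real.exp (ε₆ * x) = 1 := by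
      rw [← Real.exp_add, show -ε₆ * x + ε₆ * x = 0 by ring, Real.exp_zero]
    have h51 : ε₅⁻¹ * ε₅ = 1 := inv_mul_cancel₀ hε₅.ne'
    have h11 : ε₁ ^ 2 * ε₁⁻¹ * ε₁⁻¹ = 1 := by
      field_simp
    calc ε₁ ^ 2 * (ε₃ ^ 2)⁻¹ * ε₅⁻¹ * Real.exp (-ε₆ * x) * f x
        * (ε₅ * Real.exp (ε₆ * x) * ε₁⁻¹ * ε₁⁻¹ * pt2 (pt2 u) t x)
        = (ε₃ ^ 2)⁻¹ * (f x * pt2 (pt2 u) t x)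
          * ((Real.exp (-ε₆ * x) * Real.exp (ε₆ * x)) * (ε₅⁻¹ * ε₅)
            * (ε₁ ^ 2 * ε₁⁻¹ * ε₁⁻¹)) := by ring
      _ = _ := by rw [he, h51, h11]; ring
  have hH : (ε₃ ^ 2)⁻¹ * ε₅ ^ (-m) * Real.exp (-m * ε₆ * x) * h x
      * (ε₅ ^ m * Real.exp (ε₆ * x * m) * (u t x) ^ m)
      = (ε₃ ^ 2)⁻¹ * (h x * (u t x) ^ m) := by
    have h5 : ε₅ ^ (-m) * ε₅ ^ m = 1 := by
      rw [← Real.rpow_add hε₅, neg_add_cancel, Real.rpow_zero]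
    have hee : Real.exp (-m * ε₆ * x) * Real.exp (ε₆ * x * m) = 1 := by
      rw [← Real.exp_add, show -m * ε₆ * x + ε₆ * x * m = 0 by ring, Real.exp_zero]
    calc (ε₃ ^ 2)⁻¹ * ε₅ ^ (-m) * Real.exp (-m * ε₆ * x) * h x
        * (ε₅ ^ m * Real.exp (ε₆ * x * m) * (u t x) ^ m)
        = (ε₃ ^ 2)⁻¹ * (h x * (u t x) ^ m)
          * ((ε₅ ^ (-m) * ε₅ ^ m) * (Real.exp (-m * ε₆ * x) * Real.exp (ε₆ * x * m))) := by
          ring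
      _ = _ := by rw [h5, hee]; ring
  rw [hL, hH, hmain, sq, mul_inv]
  ring

end
end
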